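/- arXiv:1303.4575 — 2 statements merged into one kernel-verified Lean document; each statement's English description precedes it below -/
import Mathlib

section
/- Let (γ, ℓ, ℓ⁽²⁾, Y) be coordinate hypersurface data on U with inverse blocks (P, n, n⁽²⁾) and derived fields F, U, Γ̊, Γ̄. Then the following identities hold on U: (1) ∇̊_aℓ_b = F_{ab} − ℓ⁽²⁾U_{ab}; (2) ∇̊_aγ_{bc} = −ℓ_bU_{ac} − ℓ_cU_{ab}; (3) ∇̊_aP^{bc} = −(n^bP^{cf} + n^cP^{bf})F_{af} − n^bn^c∂_aℓ⁽²⁾; (4) ∇̊_an^b = −n⁽²⁾n^b∂_aℓ⁽²⁾ − (n⁽²⁾P^{bf} + n^bn^f)F_{af} + P^{bf}U_{af}; (5) for every smooth symmetric field Z_{ab}: ∇̄_dZ_{bc} − ∇̄_cZ_{bd} = ∇̊_dZ_{bc} − ∇̊_cZ_{bd} + n^f(Y_{bd}Z_{fc} − Y_{bc}Z_{fd}). -/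
open scoped BigOperators

noncomputable section

namespace HypData

variable {m : ℕ}

/-- Scalar field on ℝ^m. -/
abbrev Sc (m : ℕ) := (Fin m → ℝ) → ℝ
/-- One-index field. -/
abbrev Vec (m : ℕ) := (Fin m → ℝ) → Fin m → ℝ
/-- Two-index field. -/
abbrev Ten (m : ℕ) := (Fin m → ℝ) → Fin m → Fin m → ℝ
/-- Connection coefficients `Γ x c a b = Γ^c_{ab}` (first index upper). -/
abbrev Conn (m : ℕ) := (Fin m → ℝ) → Fin m → Fin m → Fin m → ℝ
/-- Three-index field. -/
abbrev Ten3 (m : ℕ) := (Fin m → ℝ) → Fin m → Fin m → Fin m → ℝ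

/-- Partial derivative of `f` in the `a`-th coordinate direction at `x`. -/
def pd (a : Fin m) (f : Sc m) (x : Fin m → ℝ) : ℝ :=
  fderiv ℝ f x (Pi.single a 1)

/-- Kronecker delta. -/
def kd (a b : Fin m) : ℝ := if a = b then 1 else 0

/-- Equations (EqP1)-(EqP4): `[[P,n],[nᵀ,n2]]` consists of the inverse blocks of
the block matrix `[[γ,ℓ],[ℓᵀ,ℓ2]]`. -/
def InvBlocks (γ : Fin m → Fin m → ℝ) (ℓ : Fin m → ℝ) (ℓ2 : ℝ)
    (P : Fin m → Fin m → ℝ) (n : Fin m → ℝ) (n2 : ℝ) : Prop :=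
  (∀ a b, (∑ c, P a c * γ c b) + n a * ℓ b = kd a b) ∧
  (∀ a, (∑ b, P a b * ℓ b) + ℓ2 * n a = 0) ∧
  ((∑ a, n a * ℓ a) + n2 * ℓ2 = 1) ∧
  (∀ a, (∑ b, γ a b * n b) + n2 * ℓ a = 0)

/-- ∇_a ω_b. -/
def covD1 (Γ : Conn m) (ω : Vec m) (x : Fin m → ℝ) (a b : Fin m) : ℝ :=
  pd a (fun y => ω y b) x - ∑ d, Γ x d a b * ω x d

/-- ∇_a X^b. -/
def covD1U (Γ : Conn m) (X : Vec m) (x : Fin m → ℝ) (a b : Fin m) : ℝ :=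
  pd a (fun y => X y b) x + ∑ d, Γ x b a d * X x d

/-- ∇_a T_{bc}. -/
def covD2 (Γ : Conn m) (T : Ten m) (x : Fin m → ℝ) (a b c : Fin m) : ℝ :=
  pd a (fun y => T y b c) x - (∑ d, Γ x d a b * T x d c) - (∑ d, Γ x d a c * T x b d)

/-- ∇_a T^{bc}. -/
def covD2U (Γ : Conn m) (T : Ten m) (x : Fin m → ℝ) (a b c : Fin m) : ℝ :=
  pd a (fun y => T y b c) x + (∑ d, Γ x b a d * T x d c) + (∑ d, Γ x c a d * T x b d)

/-- ∇_a S^b_c (first index of `S` upper, second lower). -/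
def covD11 (Γ : Conn m) (S : Ten m) (x : Fin m → ℝ) (a b c : Fin m) : ℝ :=
  pd a (fun y => S y b c) x + (∑ d, Γ x b a d * S x d c) - (∑ d, Γ x d a c * S x b d)

/-- ∇_a Q^{bcd}. -/
def covD3U (Γ : Conn m) (Q : Ten3 m) (x : Fin m → ℝ) (a b c d : Fin m) : ℝ :=
  pd a (fun y => Q y b c d) x + (∑ f, Γ x b a f * Q x f c d)
    + (∑ f, Γ x c a f * Q x b f d) + (∑ f, Γ x d a f * Q x b c f)

/-- Curvature `R^a_{bcd} = ∂_cΓ^a_{db} − ∂_dΓ^a_{cb} + Γ^a_{cf}Γ^f_{db} − Γ^a_{df}Γ^f_{cb}`. -/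
def curv (Γ : Conn m) (x : Fin m → ℝ) (a b c d : Fin m) : ℝ :=
  pd c (fun y => Γ y a d b) x - pd d (fun y => Γ y a c b) x
    + (∑ f, Γ x a c f * Γ x f d b) - (∑ f, Γ x a d f * Γ x f c b)

/-- `F_{ab} = ½(∂_aℓ_b − ∂_bℓ_a)`. -/
def Ff (ℓ : Vec m) (x : Fin m → ℝ) (a b : Fin m) : ℝ :=
  (pd a (fun y => ℓ y b) x - pd b (fun y => ℓ y a) x) / 2

/-- `U_{ab} = ½(n^c∂_cγ_{ab} + γ_{cb}∂_an^c + γ_{ac}∂_bn^c + ℓ_a∂_bn⁽²⁾ + ℓ_b∂_an⁽²⁾)`. -/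
def Uf (γ : Ten m) (ℓ : Vec m) (n : Vec m) (n2 : Sc m)
    (x : Fin m → ℝ) (a b : Fin m) : ℝ :=
  ((∑ c, (n x c * pd c (fun y => γ y a b) x + γ x c b * pd a (fun y => n y c) x
      + γ x a c * pd b (fun y => n y c) x))
    + ℓ x a * pd b n2 x + ℓ x b * pd a n2 x) / 2

/-- Metric hypersurface connection `Γ̊^c_{ab}`. -/
def Gam0 (γ : Ten m) (ℓ : Vec m) (P : Ten m) (n : Vec m)
    (x : Fin m → ℝ) (c a b : Fin m) : ℝ :=
  (∑ d, P x c d * (pd a (fun y => γ y b d) x + pd b (fun y => γ y a d) x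
      - pd d (fun y => γ y a b) x)) / 2
  + n x c * (pd a (fun y => ℓ y b) x + pd b (fun y => ℓ y a) x) / 2

/-- The connection `Γ̄^c_{ab} = Γ̊^c_{ab} − n^c Y_{ab}`. -/
def GamB (γ : Ten m) (ℓ : Vec m) (P : Ten m) (n : Vec m) (Y : Ten m)
    (x : Fin m → ℝ) (c a b : Fin m) : ℝ :=
  Gam0 γ ℓ P n x c a b - n x c * Y x a b

/-- `K_{ab} = n⁽²⁾Y_{ab} + U_{ab}`. -/
def Kf (γ : Ten m) (ℓ : Vec m) (n : Vec m) (n2 : Sc m) (Y : Ten m)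
    (x : Fin m → ℝ) (a b : Fin m) : ℝ :=
  n2 x * Y x a b + Uf γ ℓ n n2 x a b

/-- `φ_a = ½n⁽²⁾∂_aℓ⁽²⁾ + n^b(Y_{ab} + F_{ab})`. -/
def phif (ℓ : Vec m) (ℓ2 : Sc m) (n : Vec m) (n2 : Sc m) (Y : Ten m)
    (x : Fin m → ℝ) (a : Fin m) : ℝ :=
  n2 x * pd a ℓ2 x / 2 + ∑ b, n x b * (Y x a b + Ff ℓ x a b)

/-- `Ψ^b_a = P^{bc}(Y_{ac} + F_{ac}) + ½n^b∂_aℓ⁽²⁾`. -/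
def Psif (ℓ : Vec m) (ℓ2 : Sc m) (P : Ten m) (n : Vec m) (Y : Ten m)
    (x : Fin m → ℝ) (b a : Fin m) : ℝ :=
  (∑ c, P x b c * (Y x a c + Ff ℓ x a c)) + n x b * pd a ℓ2 x / 2

/-- Smoothness of a scalar field on `U`. -/
def SmSc (U : Set (Fin m → ℝ)) (f : Sc m) : Prop := ContDiffOn ℝ (⊤ : ℕ∞) f U
/-- Smoothness of a one-index field on `U`. -/
def SmVec (U : Set (Fin m → ℝ)) (f : Vec m) : Prop :=
  ∀ a, ContDiffOn ℝ (⊤ : ℕ∞) (fun x => f x a) U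
/-- Smoothness of a two-index field on `U`. -/
def SmTen (U : Set (Fin m → ℝ)) (f : Ten m) : Prop :=
  ∀ a b, ContDiffOn ℝ (⊤ : ℕ∞) (fun x => f x a b) U

/-- Smooth coordinate hypersurface metric data on `U`. -/
def MetricData (U : Set (Fin m → ℝ)) (γ : Ten m) (ℓ : Vec m) (ℓ2 : Sc m)
    (P : Ten m) (n : Vec m) (n2 : Sc m) : Prop :=
  SmTen U γ ∧ SmVec U ℓ ∧ SmSc U ℓ2 ∧ SmTen U P ∧ SmVec U n ∧ SmSc U n2 ∧
  (∀ x ∈ U, ∀ a b, γ x a b = γ x b a) ∧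
  (∀ x ∈ U, ∀ a b, P x a b = P x b a) ∧
  (∀ x ∈ U, InvBlocks (γ x) (ℓ x) (ℓ2 x) (P x) (n x) (n2 x))

/-- Gauge-transformed `ℓ`. -/
def gaugeL (γ : Ten m) (ℓ : Vec m) (u : Sc m) (V : Vec m) : Vec m :=
  fun x a => u x * (ℓ x a + ∑ b, V x b * γ x a b)

/-- Gauge-transformed `ℓ⁽²⁾`. -/
def gaugeL2 (γ : Ten m) (ℓ : Vec m) (ℓ2 : Sc m) (u : Sc m) (V : Vec m) : Sc m :=
  fun x => u x ^ 2 * (ℓ2 x + 2 * (∑ a, V x a * ℓ x a) + ∑ a, ∑ b, V x a * V x b * γ x a b)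

/-- Gauge-transformed `Y`. -/
def gaugeY (γ : Ten m) (ℓ : Vec m) (Y : Ten m) (u : Sc m) (V : Vec m) : Ten m :=
  fun x a b => u x * Y x a b + (ℓ x a * pd b u x + ℓ x b * pd a u x) / 2
    + ((u x * ∑ c, V x c * pd c (fun y => γ y a b) x)
      + (∑ c, γ x c b * pd a (fun y => u y * V y c) x)
      + (∑ c, γ x a c * pd b (fun y => u y * V y c) x)) / 2

/-- Gauge-transformed `P`. -/
def gaugeP (P : Ten m) (n : Vec m) (n2 : Sc m) (V : Vec m) : Ten m :=
  fun x a b => P x a b + n2 x * V x a * V x b - V x a * n x b - V x b * n x a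

/-- Gauge-transformed `n`. -/
def gaugeN (n : Vec m) (n2 : Sc m) (u : Sc m) (V : Vec m) : Vec m :=
  fun x a => (u x)⁻¹ * (n x a - n2 x * V x a)

/-- Gauge-transformed `n⁽²⁾`. -/
def gaugeN2 (n2 : Sc m) (u : Sc m) : Sc m :=
  fun x => ((u x) ^ 2)⁻¹ * n2 x

/-- Shell energy-momentum tensor `τ^{fa}` built pointwise from the jump `V_{ab}`. -/
def tauP (P : Fin m → Fin m → ℝ) (n : Fin m → ℝ) (n2 : ℝ) (V : Fin m → Fin m → ℝ)
    (f a : Fin m) : ℝ :=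
  (∑ c, ∑ d, (n f * P a c + n a * P f c) * n d * V c d)
  - (∑ c, ∑ d, (n2 * P f c * P a d + P f a * n c * n d) * V c d)
  + (n2 * P f a - n f * n a) * (∑ c, ∑ d, P c d * V c d)

/-- `τ^f_c = −(n⁽²⁾P^{bd} − n^bn^d)(δ^f_dV_{bc} − δ^f_cV_{bd})`. -/
def tauMixP (P : Fin m → Fin m → ℝ) (n : Fin m → ℝ) (n2 : ℝ)
    (V : Fin m → Fin m → ℝ) (f c : Fin m) : ℝ :=
  -(∑ b, ∑ d, (n2 * P b d - n b * n d) * (kd f d * V b c - kd f c * V b d))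

/-- `T^f = (P^{bf}n^c − P^{bc}n^f)V_{bc}`. -/
def tauVecP (P : Fin m → Fin m → ℝ) (n : Fin m → ℝ) (V : Fin m → Fin m → ℝ)
    (f : Fin m) : ℝ :=
  ∑ b, ∑ c, (P b f * n c - P b c * n f) * V b c

/-- The block matrix 𝔸. -/
def blockA (γ : Ten m) (ℓ : Vec m) (ℓ2 : Sc m) (x : Fin m → ℝ) :
    Matrix (Fin m ⊕ Unit) (Fin m ⊕ Unit) ℝ :=
  fun i j =>
    match i, j with
    | Sum.inl a, Sum.inl b => γ x a b
    | Sum.inl a, Sum.inr _ => ℓ x a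
    | Sum.inr _, Sum.inl b => ℓ x b
    | Sum.inr _, Sum.inr _ => ℓ2 x

/-- `det 𝔸` as a scalar field. -/
def detA (γ : Ten m) (ℓ : Vec m) (ℓ2 : Sc m) (x : Fin m → ℝ) : ℝ :=
  (blockA γ ℓ ℓ2 x).det


/-! ### Auxiliary lemmas -/

variable {m : ℕ}

lemma sum_kd_mul (c : Fin m) (T : Fin m → ℝ) : ∑ e, kd e c * T e = T c := by
  simp [kd, ite_mul, Finset.sum_ite_eq']

lemma sum_mul_kd (b : Fin m) (T : Fin m → ℝ) : ∑ d, T d * kd b d = T b := by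
  simp [kd, mul_ite, Finset.sum_ite_eq]

lemma sum_kd_sub (c : Fin m) (s : ℝ) (w T : Fin m → ℝ) :
    ∑ e, (kd e c - w e * s) * T e = T c - s * ∑ e, w e * T e := by
  have h : ∀ e, (kd e c - w e * s) * T e = kd e c * T e - s * (w e * T e) := fun e => by ring
  rw [Finset.sum_congr rfl fun e _ => h e, Finset.sum_sub_distrib, sum_kd_mul, Finset.mul_sum]

lemma sum_kd_sub' (b : Fin m) (s : ℝ) (w T : Fin m → ℝ) :
    ∑ d, (kd b d - s * w d) * T d = T b - s * ∑ d, w d * T d := by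
  have h : ∀ d, (kd b d - s * w d) * T d = kd b d * T d - s * (w d * T d) := fun d => by ring
  have h2 : ∑ d, kd b d * T d = T b := by simp [kd, ite_mul, Finset.sum_ite_eq]
  rw [Finset.sum_congr rfl fun d _ => h d, Finset.sum_sub_distrib, h2, Finset.mul_sum]

lemma sum_mul_kd_sub (b : Fin m) (s : ℝ) (q w : Fin m → ℝ) :
    ∑ d, q d * (kd b d - s * w d) = q b - s * ∑ d, q d * w d := by
  have h : ∀ d, q d * (kd b d - s * w d) = kd b d * q d - s * (q d * w d) := fun d => by ring
  have h2 : ∑ d, kd b d * q d = q b := by simp [kd, ite_mul, Finset.sum_ite_eq]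
  rw [Finset.sum_congr rfl fun d _ => h d, Finset.sum_sub_distrib, h2, Finset.mul_sum]

/-- ∑_d (∑_e A d e * v e) * u d = ∑_e (∑_d A d e * u d) * v e -/
lemma double_swap (A : Fin m → Fin m → ℝ) (u v : Fin m → ℝ) :
    ∑ d, (∑ e, A d e * v e) * u d = ∑ e, (∑ d, A d e * u d) * v e := by
  simp only [Finset.sum_mul]
  rw [Finset.sum_comm]
  exact Finset.sum_congr rfl fun e _ => Finset.sum_congr rfl fun d _ => by ring

/-- ∑_d (∑_e q e * T d e) * v d = ∑_e q e * (∑_d v d * T d e) -/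
lemma swap_pull (q v : Fin m → ℝ) (T : Fin m → Fin m → ℝ) :
    ∑ d, (∑ e, q e * T d e) * v d = ∑ e, q e * (∑ d, v d * T d e) := by
  simp only [Finset.sum_mul, Finset.mul_sum]
  rw [Finset.sum_comm]
  exact Finset.sum_congr rfl fun e _ => Finset.sum_congr rfl fun d _ => by ring

/-- ∑_e v e * (∑_d q d * T d e) = ∑_d q d * (∑_e v e * T d e) -/
lemma swap_pull2 (v q : Fin m → ℝ) (T : Fin m → Fin m → ℝ) :
    ∑ e, v e * (∑ d, q d * T d e) = ∑ d, q d * (∑ e, v e * T d e) := by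
  simp only [Finset.mul_sum]
  rw [Finset.sum_comm]
  exact Finset.sum_congr rfl fun e _ => Finset.sum_congr rfl fun d _ => by ring

lemma sum_split3 (f g h : Fin m → ℝ) :
    ∑ e, (f e + g e - h e) = (∑ e, f e) + (∑ e, g e) - ∑ e, h e := by
  rw [Finset.sum_sub_distrib, Finset.sum_add_distrib]


section Alg
variable {m : ℕ} (g p : Fin m → Fin m → ℝ) (l nn : Fin m → ℝ) (l2 nn2 : ℝ)
    (Dg Dp : Fin m → Fin m → Fin m → ℝ) (Dl Dn : Fin m → Fin m → ℝ) (Dl2 Dn2 : Fin m → ℝ)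

lemma algW
    (gsym : ∀ b c, g b c = g c b)
    (dD : ∀ a b, (∑ d, (Dg a b d * nn d + g b d * Dn a d)) + Dn2 a * l b + nn2 * Dl a b = 0)
    (a b : Fin m) :
    (∑ e, nn e * (Dg a b e + Dg b a e - Dg e a b)) + nn2 * (Dl a b + Dl b a)
      = -((∑ c, (nn c * Dg c a b + g c b * Dn a c + g a c * Dn b c)) + l a * Dn2 b + l b * Dn2 a) := by
  have h1 := dD a b
  have h2 := dD b a
  rw [Finset.sum_add_distrib] at h1 h2
  have e0 : ∑ e, nn e * (Dg a b e + Dg b a e - Dg e a b)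
      = ((∑ d, Dg a b d * nn d) + (∑ d, Dg b a d * nn d)) - ∑ c, nn c * Dg c a b := by
    rw [← Finset.sum_add_distrib, ← Finset.sum_sub_distrib]
    exact Finset.sum_congr rfl fun e _ => by ring
  have e1 : ∑ c, (nn c * Dg c a b + g c b * Dn a c + g a c * Dn b c)
      = ((∑ c, nn c * Dg c a b) + (∑ d, g b d * Dn a d)) + (∑ d, g a d * Dn b d) := by
    rw [← Finset.sum_add_distrib, ← Finset.sum_add_distrib]
    exact Finset.sum_congr rfl fun c _ => by rw [gsym c b]
  rw [e0, e1]
  linear_combination h1 + h2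

lemma alg1
    (gsym : ∀ b c, g b c = g c b) (psym : ∀ b c, p b c = p c b)
    (hB : ∀ b, (∑ d, p b d * l d) + l2 * nn b = 0)
    (hC : (∑ d, nn d * l d) + nn2 * l2 = 1)
    (dD : ∀ a b, (∑ d, (Dg a b d * nn d + g b d * Dn a d)) + Dn2 a * l b + nn2 * Dl a b = 0)
    (a b : Fin m) :
    Dl a b - ∑ d, ((∑ e, p d e * (Dg a b e + Dg b a e - Dg e a b))/2
        + nn d * (Dl a b + Dl b a)/2) * l d
      = (Dl a b - Dl b a)/2
        - l2 * (((∑ c, (nn c * Dg c a b + g c b * Dn a c + g a c * Dn b c))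
            + l a * Dn2 b + l b * Dn2 a)/2) := by
  have W := algW g l nn nn2 Dg Dl Dn Dn2 gsym dD a b
  have h0 : ∑ d, ((∑ e, p d e * (Dg a b e + Dg b a e - Dg e a b))/2
        + nn d * (Dl a b + Dl b a)/2) * l d
      = (∑ e, (∑ d, p d e * l d) * (Dg a b e + Dg b a e - Dg e a b))/2
        + (∑ d, nn d * l d) * ((Dl a b + Dl b a)/2) := by
    rw [Finset.sum_congr rfl (fun d _ =>
      show ((∑ e, p d e * (Dg a b e + Dg b a e - Dg e a b))/2
          + nn d * (Dl a b + Dl b a)/2) * l d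
        = ((∑ e, p d e * (Dg a b e + Dg b a e - Dg e a b)) * l d)/2
          + (nn d * l d) * ((Dl a b + Dl b a)/2) from by ring),
      Finset.sum_add_distrib, ← Finset.sum_div, double_swap, ← Finset.sum_mul]
  have h1 : ∑ e, (∑ d, p d e * l d) * (Dg a b e + Dg b a e - Dg e a b)
      = -(l2 * ∑ e, nn e * (Dg a b e + Dg b a e - Dg e a b)) := by
    have step : ∀ e, (∑ d, p d e * l d) * (Dg a b e + Dg b a e - Dg e a b)
        = -(l2 * (nn e * (Dg a b e + Dg b a e - Dg e a b))) := by
      intro e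
      have hb := hB e
      have hpe : ∑ d, p d e * l d = ∑ d, p e d * l d :=
        Finset.sum_congr rfl fun d _ => by rw [psym]
      have hval : (∑ d, p d e * l d) = -(l2 * nn e) := by rw [hpe]; linarith
      rw [hval]; ring
    rw [Finset.sum_congr rfl fun e _ => step e, Finset.sum_neg_distrib, Finset.mul_sum]
  rw [h0, h1]
  linear_combination (l2/2) * W - ((Dl a b + Dl b a)/2) * hC



lemma alg2
    (gsym : ∀ b c, g b c = g c b) (psym : ∀ b c, p b c = p c b)
    (Dgsym : ∀ a b c, Dg a b c = Dg a c b)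
    (hA : ∀ b c, (∑ d, p b d * g d c) + nn b * l c = kd b c)
    (hD : ∀ b, (∑ d, g b d * nn d) + nn2 * l b = 0)
    (dD : ∀ a b, (∑ d, (Dg a b d * nn d + g b d * Dn a d)) + Dn2 a * l b + nn2 * Dl a b = 0)
    (a b c : Fin m) :
    Dg a b c
      - ∑ d, ((∑ e, p d e * (Dg a b e + Dg b a e - Dg e a b))/2
          + nn d * (Dl a b + Dl b a)/2) * g d c
      - ∑ d, ((∑ e, p d e * (Dg a c e + Dg c a e - Dg e a c))/2
          + nn d * (Dl a c + Dl c a)/2) * g b d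
      = -(l b * (((∑ e, (nn e * Dg e a c + g e c * Dn a e + g a e * Dn c e))
            + l a * Dn2 c + l c * Dn2 a)/2))
        - l c * (((∑ e, (nn e * Dg e a b + g e b * Dn a e + g a e * Dn b e))
            + l a * Dn2 b + l b * Dn2 a)/2) := by
  have key : ∀ b' c' : Fin m,
      ∑ d, ((∑ e, p d e * (Dg a b' e + Dg b' a e - Dg e a b'))/2
          + nn d * (Dl a b' + Dl b' a)/2) * g d c'
        = (Dg a b' c' + Dg b' a c' - Dg c' a b')/2
          - (l c'/2) * ((∑ e, nn e * (Dg a b' e + Dg b' a e - Dg e a b'))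
              + nn2 * (Dl a b' + Dl b' a)) := by
    intro b' c'
    have h0 : ∑ d, ((∑ e, p d e * (Dg a b' e + Dg b' a e - Dg e a b'))/2
          + nn d * (Dl a b' + Dl b' a)/2) * g d c'
        = (∑ e, (∑ d, p d e * g d c') * (Dg a b' e + Dg b' a e - Dg e a b'))/2
          + (∑ d, nn d * g d c') * ((Dl a b' + Dl b' a)/2) := by
      rw [Finset.sum_congr rfl (fun d _ =>
        show ((∑ e, p d e * (Dg a b' e + Dg b' a e - Dg e a b'))/2
            + nn d * (Dl a b' + Dl b' a)/2) * g d c'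
          = ((∑ e, p d e * (Dg a b' e + Dg b' a e - Dg e a b')) * g d c')/2
            + (nn d * g d c') * ((Dl a b' + Dl b' a)/2) from by ring),
        Finset.sum_add_distrib, ← Finset.sum_div, double_swap, ← Finset.sum_mul]
    have hAe : ∀ e, ∑ d, p d e * g d c' = kd e c' - nn e * l c' := by
      intro e
      have h := hA e c'
      have hpe : ∑ d, p d e * g d c' = ∑ d, p e d * g d c' :=
        Finset.sum_congr rfl fun d _ => by rw [psym]
      rw [hpe]; linarith
    have hDe : ∑ d, nn d * g d c' = -(nn2 * l c') := by
      have h := hD c'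
      have hge : ∑ d, g c' d * nn d = ∑ d, nn d * g d c' :=
        Finset.sum_congr rfl fun d _ => by rw [gsym]; ring
      rw [← hge]; linarith
    rw [h0, Finset.sum_congr rfl fun e _ => by rw [hAe e], sum_kd_sub, hDe]
    ring
  have Wb := algW g l nn nn2 Dg Dl Dn Dn2 gsym dD a b
  have Wc := algW g l nn nn2 Dg Dl Dn Dn2 gsym dD a c
  have flip : ∑ d, ((∑ e, p d e * (Dg a c e + Dg c a e - Dg e a c))/2
          + nn d * (Dl a c + Dl c a)/2) * g b d
      = ∑ d, ((∑ e, p d e * (Dg a c e + Dg c a e - Dg e a c))/2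
          + nn d * (Dl a c + Dl c a)/2) * g d b :=
    Finset.sum_congr rfl fun d _ => by rw [gsym b d]
  rw [flip, key b c, key c b]
  linear_combination ((l c)/2) * Wb + ((l b)/2) * Wc + (1/2) * Dgsym a b c


/-- ∑_e v e * (∑ d, T e d * q d) = ∑ d, (∑ e, v e * T e d) * q d -/
lemma swap_pull3 {m : ℕ} (v q : Fin m → ℝ) (T : Fin m → Fin m → ℝ) :
    ∑ e, v e * (∑ d, T e d * q d) = ∑ d, (∑ e, v e * T e d) * q d := by
  simp only [Finset.mul_sum, Finset.sum_mul]
  rw [Finset.sum_comm]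
  exact Finset.sum_congr rfl fun e _ => Finset.sum_congr rfl fun d _ => by ring

/-- ∑_f v f * (∑ c, T c f * q c) = ∑ c, (∑ f, v f * T c f) * q c -/
lemma swap_pull4 {m : ℕ} (v q : Fin m → ℝ) (T : Fin m → Fin m → ℝ) :
    ∑ f, v f * (∑ c, T c f * q c) = ∑ c, (∑ f, v f * T c f) * q c := by
  simp only [Finset.mul_sum, Finset.sum_mul]
  rw [Finset.sum_comm]
  exact Finset.sum_congr rfl fun e _ => Finset.sum_congr rfl fun d _ => by ring

lemma alg4
    (gsym : ∀ b c, g b c = g c b) (psym : ∀ b c, p b c = p c b)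
    (Dgsym : ∀ a b c, Dg a b c = Dg a c b)
    (hA : ∀ b c, (∑ d, p b d * g d c) + nn b * l c = kd b c)
    (hB : ∀ b, (∑ d, p b d * l d) + l2 * nn b = 0)
    (dC : ∀ a, (∑ d, (Dn a d * l d + nn d * Dl a d)) + Dn2 a * l2 + nn2 * Dl2 a = 0)
    (dD : ∀ a b, (∑ d, (Dg a b d * nn d + g b d * Dn a d)) + Dn2 a * l b + nn2 * Dl a b = 0)
    (a b : Fin m) :
    Dn a b + ∑ d, ((∑ e, p b e * (Dg a d e + Dg d a e - Dg e a d))/2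
        + nn b * (Dl a d + Dl d a)/2) * nn d
      = -(nn2 * nn b * Dl2 a)
        - (∑ f, (nn2 * p b f + nn b * nn f) * ((Dl a f - Dl f a)/2))
        + ∑ f, p b f * (((∑ c, (nn c * Dg c a f + g c f * Dn a c + g a c * Dn f c))
            + l a * Dn2 f + l f * Dn2 a)/2) := by
  -- step 0 : reorganize the connection sum
  have h0 : ∑ d, ((∑ e, p b e * (Dg a d e + Dg d a e - Dg e a d))/2
        + nn b * (Dl a d + Dl d a)/2) * nn d
      = (∑ e, p b e * (∑ d, nn d * (Dg a d e + Dg d a e - Dg e a d)))/2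
        + nn b * ((∑ d, (Dl a d + Dl d a) * nn d)/2) := by
    rw [Finset.sum_congr rfl (fun d _ =>
      show ((∑ e, p b e * (Dg a d e + Dg d a e - Dg e a d))/2
          + nn b * (Dl a d + Dl d a)/2) * nn d
        = ((∑ e, p b e * (Dg a d e + Dg d a e - Dg e a d)) * nn d)/2
          + nn b * (((Dl a d + Dl d a) * nn d)/2) from by ring),
      Finset.sum_add_distrib, ← Finset.sum_div, swap_pull, ← Finset.mul_sum,
      ← Finset.sum_div]
  -- step V : reduce the inner contraction with nn
  have hV : ∀ e, ∑ d, nn d * (Dg a d e + Dg d a e - Dg e a d)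
      = (∑ d, nn d * Dg d a e) - (∑ d, g e d * Dn a d) + (∑ d, g a d * Dn e d)
        - Dn2 a * l e + Dn2 e * l a - nn2 * Dl a e + nn2 * Dl e a := by
    intro e
    have h1 := dD a e
    have h2 := dD e a
    rw [Finset.sum_add_distrib] at h1 h2
    have split : ∑ d, nn d * (Dg a d e + Dg d a e - Dg e a d)
        = ((∑ d, nn d * Dg a d e) + (∑ d, nn d * Dg d a e)) - ∑ d, nn d * Dg e a d := by
      rw [← Finset.sum_add_distrib, ← Finset.sum_sub_distrib]
      exact Finset.sum_congr rfl fun d _ => by ring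
    have c1 : ∑ d, nn d * Dg a d e = ∑ d, Dg a e d * nn d :=
      Finset.sum_congr rfl fun d _ => by rw [Dgsym a d e]; ring
    have c2 : ∑ d, nn d * Dg e a d = ∑ d, Dg e a d * nn d :=
      Finset.sum_congr rfl fun d _ => by ring
    rw [split, c1, c2]
    linarith
  -- step 1 : contract with p b ·
  have h1 : ∑ e, p b e * (∑ d, nn d * (Dg a d e + Dg d a e - Dg e a d))
      = (∑ e, p b e * (∑ d, nn d * Dg d a e))
        - ((Dn a b) - nn b * ∑ d, l d * Dn a d)
        + (∑ e, p b e * (∑ d, g a d * Dn e d))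
        - (-(l2 * nn b)) * Dn2 a
        + (∑ e, p b e * Dn2 e) * l a
        - nn2 * (∑ e, p b e * Dl a e)
        + nn2 * (∑ e, p b e * Dl e a) := by
    rw [Finset.sum_congr rfl (fun e _ => show
        p b e * (∑ d, nn d * (Dg a d e + Dg d a e - Dg e a d))
          = p b e * (∑ d, nn d * Dg d a e) - p b e * (∑ d, g e d * Dn a d)
            + p b e * (∑ d, g a d * Dn e d) - (p b e * l e) * Dn2 a
            + (p b e * Dn2 e) * l a - nn2 * (p b e * Dl a e) + nn2 * (p b e * Dl e a)
          from by rw [hV e]; ring)]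
    simp only [Finset.sum_add_distrib, Finset.sum_sub_distrib]
    rw [← Finset.sum_mul, ← Finset.sum_mul, ← Finset.mul_sum, ← Finset.mul_sum]
    have hmid : ∑ e, p b e * (∑ d, g e d * Dn a d)
        = Dn a b - nn b * ∑ d, l d * Dn a d := by
      have hswap : ∑ e, p b e * (∑ d, g e d * Dn a d)
          = ∑ d, (∑ e, p b e * g e d) * Dn a d := by
        simp only [Finset.mul_sum, Finset.sum_mul]
        rw [Finset.sum_comm]
        exact Finset.sum_congr rfl fun e _ => Finset.sum_congr rfl fun d _ => by ring
      have hAe : ∀ d, ∑ e, p b e * g e d = kd b d - nn b * l d := by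
        intro d
        have h := hA b d
        linarith
      rw [hswap, Finset.sum_congr rfl fun d _ => by rw [hAe d], sum_kd_sub' b (nn b) l (Dn a)]
    have hBl : ∑ e, p b e * l e = -(l2 * nn b) := by have h := hB b; linarith
    rw [hmid, hBl]
  -- step 2 : split the symmetrized sum
  have h2 : ∑ d, (Dl a d + Dl d a) * nn d
      = (∑ d, nn d * Dl a d) + ∑ d, nn d * Dl d a := by
    rw [← Finset.sum_add_distrib]
    exact Finset.sum_congr rfl fun d _ => by ring
  -- step 3 : split the F-contraction on the RHS
  have h3 : ∑ f, (nn2 * p b f + nn b * nn f) * ((Dl a f - Dl f a)/2)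
      = (nn2 * (∑ e, p b e * Dl a e) + nn b * (∑ d, nn d * Dl a d)
          - nn2 * (∑ e, p b e * Dl e a) - nn b * (∑ d, nn d * Dl d a))/2 := by
    rw [Finset.sum_congr rfl (fun f _ => show
        (nn2 * p b f + nn b * nn f) * ((Dl a f - Dl f a)/2)
          = (nn2 * (p b f * Dl a f) + nn b * (nn f * Dl a f)
              - nn2 * (p b f * Dl f a) - nn b * (nn f * Dl f a))/2 from by ring),
      ← Finset.sum_div]
    congr 1
    simp only [Finset.sum_add_distrib, Finset.sum_sub_distrib]
    rw [← Finset.mul_sum, ← Finset.mul_sum, ← Finset.mul_sum, ← Finset.mul_sum]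
  -- step 4 : expand the U-contraction on the RHS
  have h4 : ∑ f, p b f * (((∑ c, (nn c * Dg c a f + g c f * Dn a c + g a c * Dn f c))
        + l a * Dn2 f + l f * Dn2 a)/2)
      = ((∑ e, p b e * (∑ d, nn d * Dg d a e))
          + ((Dn a b) - nn b * ∑ d, l d * Dn a d)
          + (∑ e, p b e * (∑ d, g a d * Dn e d))
          + (∑ e, p b e * Dn2 e) * l a
          + (-(l2 * nn b)) * Dn2 a)/2 := by
    have inner : ∀ f, (∑ c, (nn c * Dg c a f + g c f * Dn a c + g a c * Dn f c))
        = (∑ c, nn c * Dg c a f) + (∑ c, g c f * Dn a c) + ∑ c, g a c * Dn f c := by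
      intro f
      rw [← Finset.sum_add_distrib, ← Finset.sum_add_distrib]
    rw [Finset.sum_congr rfl (fun f _ => show
        p b f * (((∑ c, (nn c * Dg c a f + g c f * Dn a c + g a c * Dn f c))
            + l a * Dn2 f + l f * Dn2 a)/2)
          = (p b f * (∑ c, nn c * Dg c a f) + p b f * (∑ c, g c f * Dn a c)
              + p b f * (∑ c, g a c * Dn f c)
              + (p b f * Dn2 f) * l a + (p b f * l f) * Dn2 a)/2
          from by rw [inner f]; ring), ← Finset.sum_div]
    congr 1
    simp only [Finset.sum_add_distrib]
    have hmid : ∑ f, p b f * (∑ c, g c f * Dn a c)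
        = Dn a b - nn b * ∑ d, l d * Dn a d := by
      have hswap : ∑ f, p b f * (∑ c, g c f * Dn a c)
          = ∑ c, (∑ f, p b f * g c f) * Dn a c := swap_pull4 (p b) (Dn a) g
      have hAe : ∀ c, ∑ f, p b f * g c f = kd b c - nn b * l c := by
        intro c
        have h := hA b c
        have hg : ∑ f, p b f * g c f = ∑ f, p b f * g f c :=
          Finset.sum_congr rfl fun f _ => by rw [gsym c f]
        rw [hg]; linarith
      rw [hswap, Finset.sum_congr rfl fun c _ => by rw [hAe c], sum_kd_sub' b (nn b) l (Dn a)]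
    have hBl : ∑ f, p b f * l f = -(l2 * nn b) := by have h := hB b; linarith
    rw [hmid, ← Finset.sum_mul, ← Finset.sum_mul, hBl]
  -- conclude
  have dC' : (∑ d, l d * Dn a d) + (∑ d, nn d * Dl a d) + Dn2 a * l2 + nn2 * Dl2 a = 0 := by
    have h := dC a
    rw [Finset.sum_add_distrib] at h
    have hc : ∑ d, Dn a d * l d = ∑ d, l d * Dn a d :=
      Finset.sum_congr rfl fun d _ => by ring
    linarith
  rw [h0, h1, h2, h3, h4]
  linear_combination (nn b) * dC'


lemma alg3
    (gsym : ∀ b c, g b c = g c b) (psym : ∀ b c, p b c = p c b)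
    (Dpsym : ∀ a b c, Dp a b c = Dp a c b)
    (hA : ∀ b c, (∑ d, p b d * g d c) + nn b * l c = kd b c)
    (hB : ∀ b, (∑ d, p b d * l d) + l2 * nn b = 0)
    (dA : ∀ a b c, (∑ d, (Dp a b d * g d c + p b d * Dg a d c)) + Dn a b * l c + nn b * Dl a c = 0)
    (dB : ∀ a b, (∑ d, (Dp a b d * l d + p b d * Dl a d)) + Dl2 a * nn b + l2 * Dn a b = 0)
    (a b c : Fin m) :
    Dp a b c + ∑ d, ((∑ e, p b e * (Dg a d e + Dg d a e - Dg e a d))/2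
        + nn b * (Dl a d + Dl d a)/2) * p d c
      + ∑ d, ((∑ e, p c e * (Dg a d e + Dg d a e - Dg e a d))/2
          + nn c * (Dl a d + Dl d a)/2) * p b d
      = -(∑ f, (nn b * p c f + nn c * p b f) * ((Dl a f - Dl f a)/2))
        - nn b * nn c * Dl2 a := by
  -- flip the second sum so that the P factor is p d b
  have flip : ∑ d, ((∑ e, p c e * (Dg a d e + Dg d a e - Dg e a d))/2
          + nn c * (Dl a d + Dl d a)/2) * p b d
      = ∑ d, ((∑ e, p c e * (Dg a d e + Dg d a e - Dg e a d))/2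
          + nn c * (Dl a d + Dl d a)/2) * p d b :=
    Finset.sum_congr rfl fun d _ => by rw [psym b d]
  -- expansion of a connection-contraction into four pieces
  have expand : ∀ bb cc : Fin m,
      ∑ d, ((∑ e, p bb e * (Dg a d e + Dg d a e - Dg e a d))/2
          + nn bb * (Dl a d + Dl d a)/2) * p d cc
      = ((∑ d, (∑ e, p bb e * Dg a d e) * p d cc)
          + (∑ d, (∑ e, p bb e * Dg d a e) * p d cc)
          - (∑ d, (∑ e, p bb e * Dg e a d) * p d cc))/2
        + nn bb * ((∑ d, (Dl a d + Dl d a) * p d cc)/2) := by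
    intro bb cc
    have isplit : ∀ d, (∑ e, p bb e * (Dg a d e + Dg d a e - Dg e a d))
        = (∑ e, p bb e * Dg a d e) + (∑ e, p bb e * Dg d a e)
          - ∑ e, p bb e * Dg e a d := by
      intro d
      rw [← Finset.sum_add_distrib, ← Finset.sum_sub_distrib]
      exact Finset.sum_congr rfl fun e _ => by ring
    rw [Finset.sum_congr rfl (fun d _ => show
        ((∑ e, p bb e * (Dg a d e + Dg d a e - Dg e a d))/2
            + nn bb * (Dl a d + Dl d a)/2) * p d cc
        = ((∑ e, p bb e * Dg a d e) * p d cc + (∑ e, p bb e * Dg d a e) * p d cc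
            - (∑ e, p bb e * Dg e a d) * p d cc)/2
          + nn bb * (((Dl a d + Dl d a) * p d cc)/2)
        from by rw [isplit d]; ring),
      Finset.sum_add_distrib, ← Finset.sum_div, sum_split3, ← Finset.mul_sum,
      ← Finset.sum_div]
  -- reduction of the first piece
  have hX1 : ∀ bb cc : Fin m, ∑ d, (∑ e, p bb e * Dg a d e) * p d cc
      = -(Dp a cc bb) - nn bb * (∑ d, p cc d * Dl a d) - nn bb * nn cc * Dl2 a
        - nn cc * (∑ e, p bb e * Dl a e) := by
    intro bb cc
    rw [swap_pull (p bb) (fun d => p d cc) (fun d e => Dg a d e)]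
    have hinner : ∀ e, ∑ d, p d cc * Dg a d e
        = -(∑ d, Dp a cc d * g d e) - Dn a cc * l e - nn cc * Dl a e := by
      intro e
      have h := dA a cc e
      rw [Finset.sum_add_distrib] at h
      have hflip : ∑ d, p d cc * Dg a d e = ∑ d, p cc d * Dg a d e :=
        Finset.sum_congr rfl fun d _ => by rw [psym]
      rw [hflip]; linarith
    rw [Finset.sum_congr rfl (fun e _ => show
        p bb e * (∑ d, p d cc * Dg a d e)
        = -(p bb e * (∑ d, Dp a cc d * g d e)) - (p bb e * l e) * Dn a cc
          - nn cc * (p bb e * Dl a e)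
        from by rw [hinner e]; ring)]
    simp only [Finset.sum_sub_distrib, Finset.sum_neg_distrib]
    rw [← Finset.sum_mul, ← Finset.mul_sum]
    have hdbl : ∑ e, p bb e * (∑ d, Dp a cc d * g d e)
        = Dp a cc bb - nn bb * (∑ d, Dp a cc d * l d) := by
      rw [swap_pull2 (p bb) (Dp a cc) g]
      have hge : ∀ d, ∑ e, p bb e * g d e = kd bb d - nn bb * l d := by
        intro d
        have h := hA bb d
        have hflip : ∑ e, p bb e * g d e = ∑ e, p bb e * g e d :=
          Finset.sum_congr rfl fun e _ => by rw [gsym d e]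
        rw [hflip]; linarith
      rw [Finset.sum_congr rfl fun d _ => by rw [hge d],
        sum_mul_kd_sub bb (nn bb) (Dp a cc) l]
    have hdB : ∑ d, Dp a cc d * l d
        = -(∑ d, p cc d * Dl a d) - Dl2 a * nn cc - l2 * Dn a cc := by
      have h := dB a cc
      rw [Finset.sum_add_distrib] at h
      linarith
    have hBl : ∑ e, p bb e * l e = -(l2 * nn bb) := by have h := hB bb; linarith
    rw [hdbl, hdB, hBl]; ring
  -- antisymmetric cancellation of the second and third pieces
  have hanti : (∑ d, (∑ e, p b e * Dg d a e) * p d c)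
        + (∑ d, (∑ e, p c e * Dg d a e) * p d b)
      = (∑ d, (∑ e, p b e * Dg e a d) * p d c)
        + (∑ d, (∑ e, p c e * Dg e a d) * p d b) := by
    have key : ∀ bb cc : Fin m, ∑ d, (∑ e, p bb e * Dg e a d) * p d cc
        = ∑ d, (∑ e, p cc e * Dg d a e) * p d bb := by
      intro bb cc
      simp only [Finset.sum_mul]
      rw [Finset.sum_comm]
      exact Finset.sum_congr rfl fun d _ => Finset.sum_congr rfl fun e _ => by
        rw [psym bb d, psym e cc]; ring
    rw [key b c, key c b]
    ring
  -- split the symmetrized Dl sums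
  have hsplit2 : ∀ cc : Fin m, ∑ d, (Dl a d + Dl d a) * p d cc
      = (∑ d, p cc d * Dl a d) + ∑ d, p cc d * Dl d a := by
    intro cc
    rw [← Finset.sum_add_distrib]
    exact Finset.sum_congr rfl fun d _ => by rw [psym d cc]; ring
  -- split the F-contraction on the RHS
  have hF : ∑ f, (nn b * p c f + nn c * p b f) * ((Dl a f - Dl f a)/2)
      = (nn b * (∑ d, p c d * Dl a d) + nn c * (∑ d, p b d * Dl a d)
          - nn b * (∑ d, p c d * Dl d a) - nn c * (∑ d, p b d * Dl d a))/2 := by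
    rw [Finset.sum_congr rfl (fun f _ => show
        (nn b * p c f + nn c * p b f) * ((Dl a f - Dl f a)/2)
        = (nn b * (p c f * Dl a f) + nn c * (p b f * Dl a f)
            - nn b * (p c f * Dl f a) - nn c * (p b f * Dl f a))/2 from by ring),
      ← Finset.sum_div]
    congr 1
    simp only [Finset.sum_add_distrib, Finset.sum_sub_distrib]
    rw [← Finset.mul_sum, ← Finset.mul_sum, ← Finset.mul_sum, ← Finset.mul_sum]
  rw [flip, expand b c, expand c b, hX1 b c, hX1 c b, hsplit2 c, hsplit2 b, hF]
  linear_combination (1/2) * hanti + (1/2) * Dpsym a b c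

end Alg

lemma pd_congr {f g : Sc m} {x : Fin m → ℝ} (h : f =ᶠ[nhds x] g) (a : Fin m) :
    pd a f x = pd a g x := by
  unfold pd; rw [Filter.EventuallyEq.fderiv_eq h]

lemma pd_eventually_const {f : Sc m} {c : ℝ} {x : Fin m → ℝ}
    (h : ∀ᶠ y in nhds x, f y = c) (a : Fin m) : pd a f x = 0 := by
  rw [pd_congr (g := fun _ => c) h a]; simp [pd]

lemma pd_add {f g : Sc m} {x : Fin m → ℝ} (hf : DifferentiableAt ℝ f x)
    (hg : DifferentiableAt ℝ g x) (a : Fin m) :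
    pd a (fun y => f y + g y) x = pd a f x + pd a g x := by
  simp [pd, fderiv_fun_add hf hg]

lemma pd_mul {f g : Sc m} {x : Fin m → ℝ} (hf : DifferentiableAt ℝ f x)
    (hg : DifferentiableAt ℝ g x) (a : Fin m) :
    pd a (fun y => f y * g y) x = f x * pd a g x + g x * pd a f x := by
  simp [pd, fderiv_fun_mul hf hg]

lemma pd_sum {f : Fin m → Sc m} {x : Fin m → ℝ}
    (hf : ∀ i, DifferentiableAt ℝ (f i) x) (a : Fin m) :
    pd a (fun y => ∑ i, f i y) x = ∑ i, pd a (f i) x := by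
  simp [pd, fderiv_fun_sum (fun i _ => hf i)]

lemma pd_sum_mul {f g : Fin m → Sc m} {x : Fin m → ℝ}
    (hf : ∀ i, DifferentiableAt ℝ (f i) x) (hg : ∀ i, DifferentiableAt ℝ (g i) x)
    (a : Fin m) :
    pd a (fun y => ∑ i, f i y * g i y) x
      = ∑ i, (pd a (f i) x * g i x + f i x * pd a (g i) x) := by
  rw [pd_sum (f := fun i => fun y => f i y * g i y) (fun i => (hf i).mul (hg i))]
  exact Finset.sum_congr rfl fun i _ => by rw [pd_mul (hf i) (hg i)]; ring

lemma smooth_diffAt {U : Set (Fin m → ℝ)} (hU : IsOpen U) {f : Sc m}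
    (h : ContDiffOn ℝ (⊤ : ℕ∞) f U) {x : Fin m → ℝ} (hx : x ∈ U) :
    DifferentiableAt ℝ f x :=
  ((h.differentiableOn (by simp)).differentiableAt (hU.mem_nhds hx))

lemma deriv_relations {U : Set (Fin m → ℝ)} (hU : IsOpen U)
    {γ : Ten m} {ℓ : Vec m} {ℓ2 : Sc m} {P : Ten m} {n : Vec m} {n2 : Sc m}
    (hdata : MetricData U γ ℓ ℓ2 P n n2) {x : Fin m → ℝ} (hx : x ∈ U) :
    (∀ a b c, (∑ d, (pd a (fun y => P y b d) x * γ x d c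
        + P x b d * pd a (fun y => γ y d c) x))
        + pd a (fun y => n y b) x * ℓ x c + n x b * pd a (fun y => ℓ y c) x = 0) ∧
    (∀ a b, (∑ d, (pd a (fun y => P y b d) x * ℓ x d
        + P x b d * pd a (fun y => ℓ y d) x))
        + pd a ℓ2 x * n x b + ℓ2 x * pd a (fun y => n y b) x = 0) ∧
    (∀ a, (∑ d, (pd a (fun y => n y d) x * ℓ x d
        + n x d * pd a (fun y => ℓ y d) x))
        + pd a n2 x * ℓ2 x + n2 x * pd a ℓ2 x = 0) ∧
    (∀ a b, (∑ d, (pd a (fun y => γ y b d) x * n x d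
        + γ x b d * pd a (fun y => n y d) x))
        + pd a n2 x * ℓ x b + n2 x * pd a (fun y => ℓ y b) x = 0) := by
  obtain ⟨hγs, hℓs, hℓ2s, hPs, hns, hn2s, hγsym, hPsym, hinv⟩ := hdata
  have dγ : ∀ b c, DifferentiableAt ℝ (fun y => γ y b c) x :=
    fun b c => smooth_diffAt hU (hγs b c) hx
  have dP : ∀ b c, DifferentiableAt ℝ (fun y => P y b c) x :=
    fun b c => smooth_diffAt hU (hPs b c) hx
  have dℓ : ∀ b, DifferentiableAt ℝ (fun y => ℓ y b) x :=
    fun b => smooth_diffAt hU (hℓs b) hx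
  have dn : ∀ b, DifferentiableAt ℝ (fun y => n y b) x :=
    fun b => smooth_diffAt hU (hns b) hx
  have dℓ2 : DifferentiableAt ℝ ℓ2 x := smooth_diffAt hU hℓ2s hx
  have dn2 : DifferentiableAt ℝ n2 x := smooth_diffAt hU hn2s hx
  have hmem := hU.mem_nhds hx
  refine ⟨?_, ?_, ?_, ?_⟩
  · intro a b c
    have h0 : pd a (fun y => (∑ d, P y b d * γ y d c) + n y b * ℓ y c) x = 0 :=
      pd_eventually_const (Filter.eventually_of_mem hmem
        (fun y hy => (hinv y hy).1 b c)) a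
    rw [pd_add (DifferentiableAt.fun_sum fun i _ => (dP b i).fun_mul (dγ i c))
        ((dn b).fun_mul (dℓ c)) a, pd_sum_mul (fun i => dP b i) (fun i => dγ i c) a,
      pd_mul (dn b) (dℓ c) a] at h0
    linear_combination h0
  · intro a b
    have h0 : pd a (fun y => (∑ d, P y b d * ℓ y d) + ℓ2 y * n y b) x = 0 :=
      pd_eventually_const (Filter.eventually_of_mem hmem
        (fun y hy => (hinv y hy).2.1 b)) a
    rw [pd_add (DifferentiableAt.fun_sum fun i _ => (dP b i).fun_mul (dℓ i))
        (dℓ2.fun_mul (dn b)) a, pd_sum_mul (fun i => dP b i) (fun i => dℓ i) a,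
      pd_mul dℓ2 (dn b) a] at h0
    linear_combination h0
  · intro a
    have h0 : pd a (fun y => (∑ d, n y d * ℓ y d) + n2 y * ℓ2 y) x = 0 :=
      pd_eventually_const (c := 1) (Filter.eventually_of_mem hmem
        (fun y hy => (hinv y hy).2.2.1)) a
    rw [pd_add (DifferentiableAt.fun_sum fun i _ => (dn i).fun_mul (dℓ i))
        (dn2.fun_mul dℓ2) a, pd_sum_mul (fun i => dn i) (fun i => dℓ i) a,
      pd_mul dn2 dℓ2 a] at h0
    linear_combination h0
  · intro a b
    have h0 : pd a (fun y => (∑ d, γ y b d * n y d) + n2 y * ℓ y b) x = 0 :=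
      pd_eventually_const (Filter.eventually_of_mem hmem
        (fun y hy => (hinv y hy).2.2.2 b)) a
    rw [pd_add (DifferentiableAt.fun_sum fun i _ => (dγ b i).fun_mul (dn i))
        (dn2.fun_mul (dℓ b)) a, pd_sum_mul (fun i => dγ b i) (fun i => dn i) a,
      pd_mul dn2 (dℓ b) a] at h0
    linear_combination h0

lemma sym_derivs {U : Set (Fin m → ℝ)} (hU : IsOpen U)
    {T : Ten m} (hTsym : ∀ x ∈ U, ∀ a b, T x a b = T x b a)
    {x : Fin m → ℝ} (hx : x ∈ U) (a b c : Fin m) :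
    pd a (fun y => T y b c) x = pd a (fun y => T y c b) x :=
  pd_congr (Filter.eventually_of_mem (hU.mem_nhds hx)
    (fun y hy => hTsym y hy b c)) a


end HypData

open HypData in
/-- Lemma 6 of the paper, identities for the metric hypersurface
connection `∇̊` and the relation between `∇̄` and `∇̊` antisymmetrised derivatives. -/
theorem statement11 (m : ℕ) (hm : 1 ≤ m) (U : Set (Fin m → ℝ)) (hU : IsOpen U)
    (γ : Ten m) (ℓ : Vec m) (ℓ2 : Sc m) (P : Ten m) (n : Vec m) (n2 : Sc m)
    (hdata : MetricData U γ ℓ ℓ2 P n n2)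
    (Y : Ten m) (hYsm : SmTen U Y) (hYs : ∀ x ∈ U, ∀ a b, Y x a b = Y x b a) :
    -- (1) ∇̊_aℓ_b = F_{ab} − ℓ⁽²⁾U_{ab}
    ((∀ x ∈ U, ∀ a b,
      covD1 (Gam0 γ ℓ P n) ℓ x a b = Ff ℓ x a b - ℓ2 x * Uf γ ℓ n n2 x a b)
    -- (2) ∇̊_aγ_{bc} = −ℓ_bU_{ac} − ℓ_cU_{ab}
    ∧ (∀ x ∈ U, ∀ a b c,
      covD2 (Gam0 γ ℓ P n) γ x a b c
        = -(ℓ x b * Uf γ ℓ n n2 x a c) - ℓ x c * Uf γ ℓ n n2 x a b)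
    -- (3) ∇̊_aP^{bc} = −(n^bP^{cf} + n^cP^{bf})F_{af} − n^bn^c∂_aℓ⁽²⁾
    ∧ (∀ x ∈ U, ∀ a b c,
      covD2U (Gam0 γ ℓ P n) P x a b c
        = -(∑ f, (n x b * P x c f + n x c * P x b f) * Ff ℓ x a f)
          - n x b * n x c * pd a ℓ2 x)
    -- (4) ∇̊_an^b = −n⁽²⁾n^b∂_aℓ⁽²⁾ − (n⁽²⁾P^{bf} + n^bn^f)F_{af} + P^{bf}U_{af}
    ∧ (∀ x ∈ U, ∀ a b,
      covD1U (Gam0 γ ℓ P n) n x a b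
        = -(n2 x * n x b * pd a ℓ2 x)
          - (∑ f, (n2 x * P x b f + n x b * n x f) * Ff ℓ x a f)
          + (∑ f, P x b f * Uf γ ℓ n n2 x a f))
    -- (5) relation between the antisymmetrised ∇̄ and ∇̊ derivatives of a symmetric Z
    ∧ (∀ Z : Ten m, SmTen U Z → (∀ x ∈ U, ∀ a b, Z x a b = Z x b a) →
        ∀ x ∈ U, ∀ b c d,
        covD2 (GamB γ ℓ P n Y) Z x d b c - covD2 (GamB γ ℓ P n Y) Z x c b d
          = covD2 (Gam0 γ ℓ P n) Z x d b c - covD2 (Gam0 γ ℓ P n) Z x c b d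
            + ∑ f, n x f * (Y x b d * Z x f c - Y x b c * Z x f d))) := by
  refine ⟨?_, ?_, ?_, ?_, ?_⟩
  · -- (1)
    intro x hx a b
    obtain ⟨dA', dB', dC', dD'⟩ := deriv_relations hU hdata hx
    simp only [covD1, Gam0, Ff, Uf]
    exact alg1 (γ x) (P x) (ℓ x) (n x) (ℓ2 x) (n2 x)
      (fun a b c => pd a (fun y => γ y b c) x)
      (fun a b => pd a (fun y => ℓ y b) x)
      (fun a b => pd a (fun y => n y b) x)
      (fun a => pd a n2 x)
      (hdata.2.2.2.2.2.2.1 x hx) (hdata.2.2.2.2.2.2.2.1 x hx)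
      (hdata.2.2.2.2.2.2.2.2 x hx).2.1 (hdata.2.2.2.2.2.2.2.2 x hx).2.2.1 dD' a b
  · -- (2)
    intro x hx a b c
    obtain ⟨dA', dB', dC', dD'⟩ := deriv_relations hU hdata hx
    simp only [covD2, Gam0, Uf]
    exact alg2 (γ x) (P x) (ℓ x) (n x) (n2 x)
      (fun a b c => pd a (fun y => γ y b c) x)
      (fun a b => pd a (fun y => ℓ y b) x)
      (fun a b => pd a (fun y => n y b) x)
      (fun a => pd a n2 x)
      (hdata.2.2.2.2.2.2.1 x hx) (hdata.2.2.2.2.2.2.2.1 x hx)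
      (fun a b c => sym_derivs hU hdata.2.2.2.2.2.2.1 hx a b c)
      (hdata.2.2.2.2.2.2.2.2 x hx).1 (hdata.2.2.2.2.2.2.2.2 x hx).2.2.2 dD' a b c
  · -- (3)
    intro x hx a b c
    obtain ⟨dA', dB', dC', dD'⟩ := deriv_relations hU hdata hx
    simp only [covD2U, Gam0, Ff]
    exact alg3 (γ x) (P x) (ℓ x) (n x) (ℓ2 x)
      (fun a b c => pd a (fun y => γ y b c) x)
      (fun a b c => pd a (fun y => P y b c) x)
      (fun a b => pd a (fun y => ℓ y b) x)
      (fun a b => pd a (fun y => n y b) x)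
      (fun a => pd a ℓ2 x)
      (hdata.2.2.2.2.2.2.1 x hx) (hdata.2.2.2.2.2.2.2.1 x hx)
      (fun a b c => sym_derivs hU hdata.2.2.2.2.2.2.2.1 hx a b c)
      (hdata.2.2.2.2.2.2.2.2 x hx).1 (hdata.2.2.2.2.2.2.2.2 x hx).2.1 dA' dB' a b c
  · -- (4)
    intro x hx a b
    obtain ⟨dA', dB', dC', dD'⟩ := deriv_relations hU hdata hx
    simp only [covD1U, Gam0, Ff, Uf]
    exact alg4 (γ x) (P x) (ℓ x) (n x) (ℓ2 x) (n2 x)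
      (fun a b c => pd a (fun y => γ y b c) x)
      (fun a b => pd a (fun y => ℓ y b) x)
      (fun a b => pd a (fun y => n y b) x)
      (fun a => pd a ℓ2 x)
      (fun a => pd a n2 x)
      (hdata.2.2.2.2.2.2.1 x hx) (hdata.2.2.2.2.2.2.2.1 x hx)
      (fun a b c => sym_derivs hU hdata.2.2.2.2.2.2.1 hx a b c)
      (hdata.2.2.2.2.2.2.2.2 x hx).1 (hdata.2.2.2.2.2.2.2.2 x hx).2.1 dC' dD' a b
  · -- (5)
    intro Z hZsm hZs x hx b c d
    simp only [covD2, GamB]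
    have hexp1 : ∀ dd bb cc : Fin m,
        ∑ e, (Gam0 γ ℓ P n x e dd bb - n x e * Y x dd bb) * Z x e cc
          = (∑ e, Gam0 γ ℓ P n x e dd bb * Z x e cc)
            - Y x dd bb * ∑ e, n x e * Z x e cc := by
      intro dd bb cc
      rw [Finset.sum_congr rfl (fun e _ => show
          (Gam0 γ ℓ P n x e dd bb - n x e * Y x dd bb) * Z x e cc
            = Gam0 γ ℓ P n x e dd bb * Z x e cc - Y x dd bb * (n x e * Z x e cc)
          from by ring), Finset.sum_sub_distrib, ← Finset.mul_sum]
    have hexp2 : ∀ dd cc : Fin m,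
        ∑ e, (Gam0 γ ℓ P n x e dd cc - n x e * Y x dd cc) * Z x b e
          = (∑ e, Gam0 γ ℓ P n x e dd cc * Z x b e)
            - Y x dd cc * ∑ e, n x e * Z x b e := by
      intro dd cc
      rw [Finset.sum_congr rfl (fun e _ => show
          (Gam0 γ ℓ P n x e dd cc - n x e * Y x dd cc) * Z x b e
            = Gam0 γ ℓ P n x e dd cc * Z x b e - Y x dd cc * (n x e * Z x b e)
          from by ring), Finset.sum_sub_distrib, ← Finset.mul_sum]
    have hsplit : ∑ f, n x f * (Y x b d * Z x f c - Y x b c * Z x f d)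
        = Y x b d * (∑ f, n x f * Z x f c) - Y x b c * ∑ f, n x f * Z x f d := by
      rw [Finset.sum_congr rfl (fun f _ => show
          n x f * (Y x b d * Z x f c - Y x b c * Z x f d)
            = Y x b d * (n x f * Z x f c) - Y x b c * (n x f * Z x f d)
          from by ring), Finset.sum_sub_distrib, ← Finset.mul_sum, ← Finset.mul_sum]
    rw [hexp1 d b c, hexp2 d c, hexp1 c b d, hexp2 c d, hsplit]
    linear_combination (∑ e, n x e * Z x e c) * hYs x hx d b
      - (∑ e, n x e * Z x e d) * hYs x hx c b
      + (∑ e, n x e * Z x b e) * hYs x hx d c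
end
end

section
/- Let (γ, ℓ, ℓ⁽²⁾) be coordinate hypersurface metric data on U with inverse blocks (P, n, n⁽²⁾) and derived fields F, U, Γ̊. Then the following identities hold on U: (1) ∇̊_c(n⁽²⁾P^{bd} − n^bn^d) = −(n⁽²⁾P^{bd} − n^bn^d)(2F_{cf}n^f + n⁽²⁾∂_cℓ⁽²⁾) + U_{cf}(2n^fP^{bd} − P^{bf}n^d − P^{df}n^b); (2) ∇̊_d(P^{bd}n^c − P^{bc}n^d) = n⁽²⁾∂_dℓ⁽²⁾(P^{bc}n^d − P^{bd}n^c) + F_{df}(n^bn^dP^{cf} − P^{bd}n^cn^f − n⁽²⁾P^{bd}P^{cf}) + U_{df}(P^{bd}P^{cf} − P^{bc}P^{df}); and for every smooth symmetric field Z_{ab}: (3) (∇̊_dZ_{bc} − ∇̊_cZ_{bd})(n⁽²⁾P^{bd} − n^bn^d) = ∇̊_f[(n⁽²⁾P^{bd} − n^bn^d)(δ^f_dZ_{bc} − δ^f_cZ_{bd})] + (n⁽²⁾P^{bd} − n^bn^d)[Z_{bc}(2F_{df}n^f + n⁽²⁾∂_dℓ⁽²⁾) − Z_{bd}(2F_{cf}n^f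 + n⁽²⁾∂_cℓ⁽²⁾)] + (P^{df}n^b − P^{bd}n^f)(Z_{bc}U_{df} − 2Z_{bd}U_{cf}); (4) (∇̊_dZ_{bc} − ∇̊_cZ_{bd})P^{bd}n^c = ∇̊_d((P^{bd}n^c − P^{bc}n^d)Z_{bc}) + Z_{bc}[U_{df}(P^{bc}P^{df} − P^{bd}P^{cf}) + 2F_{df}P^{bd}n^cn^f + n⁽²⁾∂_dℓ⁽²⁾(P^{bd}n^c − P^{bc}n^d)]. -/
open scoped BigOperators

noncomputable section

namespace HypAux
open HypData
variable {m : ℕ}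
lemma kd_symm (a b : Fin m) : kd a b = kd b a := by
  unfold kd; by_cases h : a = b <;> simp [h, Ne.symm, eq_comm]
lemma sum_kd_mul (a : Fin m) (f : Fin m → ℝ) : ∑ b, kd a b * f b = f a := by
  simp [kd, ite_mul, Finset.sum_ite_eq]
structure PD (m : ℕ) where
  g : Fin m → Fin m → ℝ
  p : Fin m → Fin m → ℝ
  l : Fin m → ℝ
  nn : Fin m → ℝ
  l2 : ℝ
  nn2 : ℝ
  Dg : Fin m → Fin m → Fin m → ℝ
  Dl : Fin m → Fin m → ℝ
  Dl2 : Fin m → ℝ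
  Dp : Fin m → Fin m → Fin m → ℝ
  Dn : Fin m → Fin m → ℝ
  Dn2 : Fin m → ℝ
  hg : ∀ a b, g a b = g b a
  hp : ∀ a b, p a b = p b a
  hDg : ∀ e a b, Dg e a b = Dg e b a
  i1 : ∀ a b, (∑ c, p a c * g c b) + nn a * l b = kd a b
  i2 : ∀ a, (∑ b, p a b * l b) + l2 * nn a = 0
  i3 : (∑ a, nn a * l a) + nn2 * l2 = 1
  i4 : ∀ a, (∑ b, g a b * nn b) + nn2 * l a = 0
  d1 : ∀ e a b, (∑ c, (Dp e a c * g c b + p a c * Dg e c b)) + (Dn e a * l b + nn a * Dl e b) = 0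
  d2 : ∀ e a, (∑ b, (Dp e a b * l b + p a b * Dl e b)) + (Dl2 e * nn a + l2 * Dn e a) = 0
  d3 : ∀ e, (∑ a, (Dn e a * l a + nn a * Dl e a)) + (Dn2 e * l2 + nn2 * Dl2 e) = 0
  d4 : ∀ e a, (∑ b, (Dg e a b * nn b + g a b * Dn e b)) + (Dn2 e * l a + nn2 * Dl e a) = 0
namespace PD
variable (D : PD m)
def F (a b : Fin m) : ℝ := (D.Dl a b - D.Dl b a) / 2
def U (a b : Fin m) : ℝ :=
  ((∑ c, (D.nn c * D.Dg c a b + D.g c b * D.Dn a c + D.g a c * D.Dn b c))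
    + D.l a * D.Dn2 b + D.l b * D.Dn2 a) / 2
def Gam (c a b : Fin m) : ℝ :=
  (∑ d, D.p c d * (D.Dg a b d + D.Dg b a d - D.Dg d a b)) / 2
  + D.nn c * (D.Dl a b + D.Dl b a) / 2
def Fn (c : Fin m) : ℝ := ∑ f, D.F c f * D.nn f
def PF (c a : Fin m) : ℝ := ∑ f, D.p a f * D.F c f
def PU (c a : Fin m) : ℝ := ∑ f, D.p a f * D.U c f
def tU (c : Fin m) : ℝ := ∑ f, D.nn f * D.U c f
def s (c : Fin m) : ℝ := 2 * D.Fn c + D.nn2 * D.Dl2 c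

lemma i1'' (a b : Fin m) : (∑ c, D.g a c * D.p c b) = kd a b - D.l a * D.nn b := by
  have h := D.i1 b a
  rw [kd_symm]
  have : (∑ c, D.g a c * D.p c b) = ∑ c, D.p b c * D.g c a :=
    Finset.sum_congr rfl fun c _ => by rw [D.hg a c, D.hp c b]; ring
  rw [this]; linarith
lemma i1r (a b : Fin m) : (∑ c, D.p a c * D.g c b) = kd a b - D.nn a * D.l b := by
  have := D.i1 a b; linarith
lemma i2r (a : Fin m) : (∑ b, D.p a b * D.l b) = -(D.l2 * D.nn a) := by
  have := D.i2 a; linarith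
lemma i4r (a : Fin m) : (∑ b, D.g a b * D.nn b) = -(D.nn2 * D.l a) := by
  have := D.i4 a; linarith
lemma d4' (e a : Fin m) : ∑ b, D.g a b * D.Dn e b
    = -(∑ b, D.Dg e a b * D.nn b) - D.Dn2 e * D.l a - D.nn2 * D.Dl e a := by
  have h := D.d4 e a
  rw [Finset.sum_add_distrib] at h
  linarith
lemma d3' (e : Fin m) : ∑ a, D.l a * D.Dn e a
    = -(∑ a, D.nn a * D.Dl e a) - D.Dn2 e * D.l2 - D.nn2 * D.Dl2 e := by
  have h := D.d3 e
  rw [Finset.sum_add_distrib] at h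
  have : (∑ a, D.l a * D.Dn e a) = ∑ a, D.Dn e a * D.l a :=
    Finset.sum_congr rfl fun a _ => by ring
  rw [this]; linarith
lemma d1' (e a b : Fin m) : ∑ c, D.Dp e a c * D.g c b
    = -(∑ c, D.p a c * D.Dg e c b) - D.Dn e a * D.l b - D.nn a * D.Dl e b := by
  have h := D.d1 e a b
  rw [Finset.sum_add_distrib] at h
  linarith
lemma d2' (e a : Fin m) : ∑ b, D.Dp e a b * D.l b
    = -(∑ b, D.p a b * D.Dl e b) - D.Dl2 e * D.nn a - D.l2 * D.Dn e a := by
  have h := D.d2 e a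
  rw [Finset.sum_add_distrib] at h
  linarith

lemma Ulem (a b : Fin m) : D.U a b
    = (∑ c, D.nn c * (D.Dg c a b - D.Dg a b c - D.Dg b a c)) / 2
      - D.nn2 * (D.Dl a b + D.Dl b a) / 2 := by
  unfold U
  have h1 : ∑ c, D.g c b * D.Dn a c
      = -(∑ c, D.Dg a b c * D.nn c) - D.Dn2 a * D.l b - D.nn2 * D.Dl a b := by
    rw [show ∑ c, D.g c b * D.Dn a c = ∑ c, D.g b c * D.Dn a c from
      Finset.sum_congr rfl fun c _ => by rw [D.hg c b]]
    exact D.d4' a b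
  have h2 : ∑ c, D.g a c * D.Dn b c
      = -(∑ c, D.Dg b a c * D.nn c) - D.Dn2 b * D.l a - D.nn2 * D.Dl b a := D.d4' b a
  rw [show (∑ c, (D.nn c * D.Dg c a b + D.g c b * D.Dn a c + D.g a c * D.Dn b c))
      = (∑ c, D.nn c * D.Dg c a b) + (∑ c, D.g c b * D.Dn a c) + (∑ c, D.g a c * D.Dn b c) by
    rw [Finset.sum_add_distrib, Finset.sum_add_distrib]]
  rw [h1, h2]
  rw [show (∑ c, D.nn c * (D.Dg c a b - D.Dg a b c - D.Dg b a c))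
      = (∑ c, D.nn c * D.Dg c a b) - (∑ c, D.Dg a b c * D.nn c) - (∑ c, D.Dg b a c * D.nn c) by
    rw [← Finset.sum_sub_distrib, ← Finset.sum_sub_distrib]
    exact Finset.sum_congr rfl fun c _ => by ring]
  ring

lemma Usym (a b : Fin m) : D.U a b = D.U b a := by
  rw [D.Ulem a b, D.Ulem b a]
  have h : ∀ c, D.nn c * (D.Dg c a b - D.Dg a b c - D.Dg b a c)
      = D.nn c * (D.Dg c b a - D.Dg b a c - D.Dg a b c) := by
    intro c; rw [D.hDg c a b]; ring
  rw [Finset.sum_congr rfl fun c _ => h c]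
  ring

lemma Fantisym (a b : Fin m) : D.F a b = - D.F b a := by unfold F; ring

lemma Sn (e c : Fin m) : D.Dn e c
    = -(∑ a, ∑ b, D.p c a * D.Dg e a b * D.nn b) - D.nn2 * (∑ a, D.p c a * D.Dl e a)
      - D.nn c * (∑ a, D.nn a * D.Dl e a) - D.nn c * D.nn2 * D.Dl2 e := by
  have key : ∑ a, D.p c a * (∑ b, D.g a b * D.Dn e b)
      = D.Dn e c - D.nn c * (∑ b, D.l b * D.Dn e b) := by
    calc ∑ a, D.p c a * (∑ b, D.g a b * D.Dn e b)
        = ∑ a, ∑ b, (D.p c a * D.g a b) * D.Dn e b := by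
          refine Finset.sum_congr rfl fun a _ => ?_
          rw [Finset.mul_sum]; exact Finset.sum_congr rfl fun b _ => by ring
      _ = ∑ b, ∑ a, (D.p c a * D.g a b) * D.Dn e b := Finset.sum_comm
      _ = ∑ b, (kd c b - D.nn c * D.l b) * D.Dn e b := by
          refine Finset.sum_congr rfl fun b _ => ?_
          rw [← Finset.sum_mul]
          congr 1
          exact D.i1r c b
      _ = (∑ b, kd c b * D.Dn e b) - D.nn c * ∑ b, D.l b * D.Dn e b := by
          rw [Finset.mul_sum, ← Finset.sum_sub_distrib]
          exact Finset.sum_congr rfl fun b _ => by ring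
      _ = D.Dn e c - D.nn c * ∑ b, D.l b * D.Dn e b := by rw [sum_kd_mul]
  have expand : ∑ a, D.p c a * (∑ b, D.g a b * D.Dn e b)
      = -(∑ a, ∑ b, D.p c a * D.Dg e a b * D.nn b) - D.Dn2 e * (∑ a, D.p c a * D.l a)
        - D.nn2 * (∑ a, D.p c a * D.Dl e a) := by
    calc ∑ a, D.p c a * (∑ b, D.g a b * D.Dn e b)
        = ∑ a, (-(∑ b, D.p c a * D.Dg e a b * D.nn b)
            - D.Dn2 e * (D.p c a * D.l a) - D.nn2 * (D.p c a * D.Dl e a)) := by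
          refine Finset.sum_congr rfl fun a _ => ?_
          rw [D.d4' e a, mul_sub, mul_sub, mul_neg, Finset.mul_sum]
          rw [show (∑ b, D.p c a * (D.Dg e a b * D.nn b)) = ∑ b, D.p c a * D.Dg e a b * D.nn b from
            Finset.sum_congr rfl fun b _ => by ring]
          ring
      _ = _ := by
          rw [Finset.sum_sub_distrib, Finset.sum_sub_distrib, Finset.sum_neg_distrib,
            ← Finset.mul_sum, ← Finset.mul_sum]
  have hln := D.d3' e
  have hpl := D.i2r c
  have hk := key
  rw [expand, hln, hpl] at hk
  linarith

lemma Sp (e a d : Fin m) : D.Dp e a d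
    = -(∑ b, ∑ c, D.p a c * D.Dg e c b * D.p b d) - D.nn a * (∑ b, D.Dl e b * D.p b d)
      - (∑ b, D.p a b * D.Dl e b) * D.nn d - D.nn a * D.nn d * D.Dl2 e := by
  have key : ∑ b, (∑ c, D.Dp e a c * D.g c b) * D.p b d
      = D.Dp e a d - (∑ c, D.Dp e a c * D.l c) * D.nn d := by
    calc ∑ b, (∑ c, D.Dp e a c * D.g c b) * D.p b d
        = ∑ b, ∑ c, D.Dp e a c * (D.g c b * D.p b d) := by
          refine Finset.sum_congr rfl fun b _ => ?_
          rw [Finset.sum_mul]; exact Finset.sum_congr rfl fun c _ => by ring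
      _ = ∑ c, ∑ b, D.Dp e a c * (D.g c b * D.p b d) := Finset.sum_comm
      _ = ∑ c, D.Dp e a c * (kd c d - D.l c * D.nn d) := by
          refine Finset.sum_congr rfl fun c _ => ?_
          rw [← Finset.mul_sum, D.i1'' c d]
      _ = (∑ c, kd d c * D.Dp e a c) - (∑ c, D.Dp e a c * D.l c) * D.nn d := by
          rw [Finset.sum_mul, ← Finset.sum_sub_distrib]
          exact Finset.sum_congr rfl fun c _ => by rw [kd_symm d c]; ring
      _ = D.Dp e a d - (∑ c, D.Dp e a c * D.l c) * D.nn d := by rw [sum_kd_mul]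
  have expand : ∑ b, (∑ c, D.Dp e a c * D.g c b) * D.p b d
      = -(∑ b, ∑ c, D.p a c * D.Dg e c b * D.p b d) - (∑ b, D.Dn e a * D.l b * D.p b d)
        - D.nn a * (∑ b, D.Dl e b * D.p b d) := by
    calc ∑ b, (∑ c, D.Dp e a c * D.g c b) * D.p b d
        = ∑ b, (-(∑ c, D.p a c * D.Dg e c b * D.p b d) - D.Dn e a * D.l b * D.p b d
            - D.nn a * (D.Dl e b * D.p b d)) := by
          refine Finset.sum_congr rfl fun b _ => ?_
          rw [D.d1' e a b, sub_mul, sub_mul, neg_mul, Finset.sum_mul]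
          ring
      _ = _ := by
          rw [Finset.sum_sub_distrib, Finset.sum_sub_distrib, Finset.sum_neg_distrib,
            ← Finset.mul_sum]
  have hDpl := D.d2' e a
  have hlp : (∑ b, D.Dn e a * D.l b * D.p b d) = D.Dn e a * -(D.l2 * D.nn d) := by
    rw [show (∑ b, D.Dn e a * D.l b * D.p b d) = D.Dn e a * ∑ b, D.p d b * D.l b by
      rw [Finset.mul_sum]; exact Finset.sum_congr rfl fun b _ => by rw [D.hp d b]; ring]
    rw [D.i2r d]
  have hk := key
  rw [expand, hDpl, hlp] at hk
  linarith

lemma Sn2 (e : Fin m) : D.Dn2 e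
    = -(∑ a, ∑ b, D.nn a * D.Dg e a b * D.nn b) - 2 * D.nn2 * (∑ a, D.nn a * D.Dl e a)
      - D.nn2 * D.nn2 * D.Dl2 e := by
  have key : ∑ a, D.nn a * (∑ b, D.g a b * D.Dn e b)
      = -(D.nn2 * ∑ b, D.l b * D.Dn e b) := by
    calc ∑ a, D.nn a * (∑ b, D.g a b * D.Dn e b)
        = ∑ a, ∑ b, (D.nn a * D.g a b) * D.Dn e b := by
          refine Finset.sum_congr rfl fun a _ => ?_
          rw [Finset.mul_sum]; exact Finset.sum_congr rfl fun b _ => by ring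
      _ = ∑ b, ∑ a, (D.nn a * D.g a b) * D.Dn e b := Finset.sum_comm
      _ = ∑ b, -(D.nn2 * D.l b) * D.Dn e b := by
          refine Finset.sum_congr rfl fun b _ => ?_
          rw [← Finset.sum_mul]
          congr 1
          rw [show (∑ a, D.nn a * D.g a b) = ∑ a, D.g b a * D.nn a from
            Finset.sum_congr rfl fun a _ => by rw [D.hg b a]; ring]
          exact D.i4r b
      _ = -(D.nn2 * ∑ b, D.l b * D.Dn e b) := by
          rw [Finset.mul_sum, ← Finset.sum_neg_distrib]
          exact Finset.sum_congr rfl fun b _ => by ring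
  have expand : ∑ a, D.nn a * (∑ b, D.g a b * D.Dn e b)
      = -(∑ a, ∑ b, D.nn a * D.Dg e a b * D.nn b) - D.Dn2 e * (∑ a, D.nn a * D.l a)
        - D.nn2 * (∑ a, D.nn a * D.Dl e a) := by
    calc ∑ a, D.nn a * (∑ b, D.g a b * D.Dn e b)
        = ∑ a, (-(∑ b, D.nn a * D.Dg e a b * D.nn b)
            - D.Dn2 e * (D.nn a * D.l a) - D.nn2 * (D.nn a * D.Dl e a)) := by
          refine Finset.sum_congr rfl fun a _ => ?_
          rw [D.d4' e a, mul_sub, mul_sub, mul_neg, Finset.mul_sum]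
          rw [show (∑ b, D.nn a * (D.Dg e a b * D.nn b)) = ∑ b, D.nn a * D.Dg e a b * D.nn b from
            Finset.sum_congr rfl fun b _ => by ring]
          ring
      _ = _ := by
          rw [Finset.sum_sub_distrib, Finset.sum_sub_distrib, Finset.sum_neg_distrib,
            ← Finset.mul_sum, ← Finset.mul_sum]
  have hln := D.d3' e
  have hnl : (∑ a, D.nn a * D.l a) = 1 - D.nn2 * D.l2 := by have := D.i3; linarith
  have hk := key
  rw [expand, hln, hnl] at hk
  nlinarith [hk]

lemma sum2_swap (F : Fin m → Fin m → ℝ) : ∑ a, ∑ b, F a b = ∑ a, ∑ b, F b a :=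
  Finset.sum_comm

lemma Bn2 (c : Fin m) : D.Dn2 c = -(D.nn2 * D.s c) + 2 * D.tU c := by
  have hinner : ∀ f, 2 * (D.nn f * D.U c f)
      = (∑ d, (D.nn f * D.nn d * D.Dg d c f - D.nn f * D.nn d * D.Dg c f d
          - D.nn f * D.nn d * D.Dg f c d)) - D.nn2 * (D.nn f * (D.Dl c f + D.Dl f c)) := by
    intro f
    rw [D.Ulem c f]
    rw [show (∑ d, (D.nn f * D.nn d * D.Dg d c f - D.nn f * D.nn d * D.Dg c f d
          - D.nn f * D.nn d * D.Dg f c d))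
        = D.nn f * ∑ d, D.nn d * (D.Dg d c f - D.Dg c f d - D.Dg f c d) by
      rw [Finset.mul_sum]; exact Finset.sum_congr rfl fun d _ => by ring]
    ring
  have h2tU : 2 * D.tU c
      = (∑ f, ∑ d, D.nn f * D.nn d * D.Dg d c f) - (∑ f, ∑ d, D.nn f * D.nn d * D.Dg c f d)
        - (∑ f, ∑ d, D.nn f * D.nn d * D.Dg f c d)
        - D.nn2 * (∑ f, D.nn f * (D.Dl c f + D.Dl f c)) := by
    unfold tU
    rw [Finset.mul_sum, Finset.sum_congr rfl fun f _ => hinner f]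
    simp only [Finset.sum_sub_distrib]
    rw [← Finset.mul_sum]
  have hA13 : (∑ f, ∑ d, D.nn f * D.nn d * D.Dg d c f)
      = (∑ f, ∑ d, D.nn f * D.nn d * D.Dg f c d) := by
    rw [sum2_swap (fun f d => D.nn f * D.nn d * D.Dg d c f)]
    exact Finset.sum_congr rfl fun f _ => Finset.sum_congr rfl fun d _ => by ring
  have hA2 : (∑ f, ∑ d, D.nn f * D.nn d * D.Dg c f d)
      = (∑ a, ∑ b, D.nn a * D.Dg c a b * D.nn b) :=
    Finset.sum_congr rfl fun f _ => Finset.sum_congr rfl fun d _ => by ring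
  have hFn : 2 * D.Fn c = ∑ f, D.nn f * (D.Dl c f - D.Dl f c) := by
    unfold Fn F
    rw [Finset.mul_sum]
    exact Finset.sum_congr rfl fun f _ => by ring
  have hmerge : (∑ f, D.nn f * (D.Dl c f - D.Dl f c)) + (∑ f, D.nn f * (D.Dl c f + D.Dl f c))
      = 2 * ∑ f, D.nn f * D.Dl c f := by
    rw [← Finset.sum_add_distrib, Finset.mul_sum]
    exact Finset.sum_congr rfl fun f _ => by ring
  have hSn2 := D.Sn2 c
  unfold s
  rw [hA13, hA2] at h2tU
  linear_combination hSn2 - h2tU + D.nn2 * hFn + D.nn2 * hmerge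

lemma PFeq (c b : Fin m) : 2 * D.PF c b
    = (∑ e, D.p b e * D.Dl c e) - (∑ e, D.p b e * D.Dl e c) := by
  unfold PF F
  rw [Finset.mul_sum, ← Finset.sum_sub_distrib]
  exact Finset.sum_congr rfl fun e _ => by ring

lemma Fneq (c : Fin m) : 2 * D.Fn c
    = (∑ f, D.nn f * D.Dl c f) - (∑ f, D.nn f * D.Dl f c) := by
  unfold Fn F
  rw [Finset.mul_sum, ← Finset.sum_sub_distrib]
  exact Finset.sum_congr rfl fun f _ => by ring

lemma PUeq (c b : Fin m) : 2 * D.PU c b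
    = (∑ e, ∑ d, D.p b e * D.nn d * D.Dg d c e) - (∑ e, ∑ d, D.p b e * D.nn d * D.Dg c d e)
      - (∑ e, ∑ d, D.p b e * D.nn d * D.Dg e c d)
      - D.nn2 * ((∑ e, D.p b e * D.Dl c e) + (∑ e, D.p b e * D.Dl e c)) := by
  have hinner : ∀ e, 2 * (D.p b e * D.U c e)
      = (∑ d, (D.p b e * D.nn d * D.Dg d c e - D.p b e * D.nn d * D.Dg c d e
          - D.p b e * D.nn d * D.Dg e c d))
        - D.nn2 * (D.p b e * D.Dl c e + D.p b e * D.Dl e c) := by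
    intro e
    rw [D.Ulem c e]
    rw [show (∑ d, (D.p b e * D.nn d * D.Dg d c e - D.p b e * D.nn d * D.Dg c d e
          - D.p b e * D.nn d * D.Dg e c d))
        = D.p b e * ∑ d, D.nn d * (D.Dg d c e - D.Dg c e d - D.Dg e c d) by
      rw [Finset.mul_sum]
      refine Finset.sum_congr rfl fun d _ => ?_
      rw [D.hDg c e d]; ring]
    ring
  unfold PU
  rw [Finset.mul_sum, Finset.sum_congr rfl fun e _ => hinner e]
  simp only [Finset.sum_sub_distrib]
  rw [← Finset.mul_sum, Finset.sum_add_distrib]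

lemma Bn (c b : Fin m) : D.Dn c b + (∑ f, D.Gam b c f * D.nn f)
    = -(D.nn b * (D.Fn c + D.nn2 * D.Dl2 c)) + D.PU c b - D.nn2 * D.PF c b := by
  have hmatch : (∑ a, ∑ d, D.p b a * D.Dg c a d * D.nn d)
      = ∑ e, ∑ d, D.p b e * D.nn d * D.Dg c d e :=
    Finset.sum_congr rfl fun e _ => Finset.sum_congr rfl fun d _ => by
      rw [D.hDg c e d]; ring
  have e1 : D.Dn c b = -(∑ e, ∑ d, D.p b e * D.nn d * D.Dg c d e)
      - D.nn2 * (∑ e, D.p b e * D.Dl c e) - D.nn b * (∑ f, D.nn f * D.Dl c f)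
      - D.nn b * D.nn2 * D.Dl2 c := by
    rw [D.Sn c b, hmatch]
  have hGamf : ∀ f, 2 * (D.Gam b c f * D.nn f)
      = (∑ e, (D.p b e * D.Dg c f e * D.nn f + D.p b e * D.Dg f c e * D.nn f
          - D.p b e * D.Dg e c f * D.nn f))
        + D.nn b * (D.nn f * D.Dl c f + D.nn f * D.Dl f c) := by
    intro f
    unfold Gam
    rw [show (∑ e, (D.p b e * D.Dg c f e * D.nn f + D.p b e * D.Dg f c e * D.nn f
          - D.p b e * D.Dg e c f * D.nn f))
        = (∑ e, D.p b e * (D.Dg c f e + D.Dg f c e - D.Dg e c f)) * D.nn f by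
      rw [Finset.sum_mul]; exact Finset.sum_congr rfl fun e _ => by ring]
    ring
  have e2 : 2 * (∑ f, D.Gam b c f * D.nn f)
      = ((∑ f, ∑ e, D.p b e * D.Dg c f e * D.nn f)
          + (∑ f, ∑ e, D.p b e * D.Dg f c e * D.nn f)
          - (∑ f, ∑ e, D.p b e * D.Dg e c f * D.nn f))
        + D.nn b * ((∑ f, D.nn f * D.Dl c f) + (∑ f, D.nn f * D.Dl f c)) := by
    rw [Finset.mul_sum, Finset.sum_congr rfl fun f _ => hGamf f]
    simp only [Finset.sum_add_distrib, Finset.sum_sub_distrib]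
    rw [← Finset.mul_sum, Finset.sum_add_distrib]
  have e3 : (∑ f, ∑ e, D.p b e * D.Dg c f e * D.nn f)
      = ∑ e, ∑ d, D.p b e * D.nn d * D.Dg c d e := by
    rw [sum2_swap (fun f e => D.p b e * D.Dg c f e * D.nn f)]
    exact Finset.sum_congr rfl fun e _ => Finset.sum_congr rfl fun d _ => by ring
  have e4 : (∑ f, ∑ e, D.p b e * D.Dg f c e * D.nn f)
      = ∑ e, ∑ d, D.p b e * D.nn d * D.Dg d c e := by
    rw [sum2_swap (fun f e => D.p b e * D.Dg f c e * D.nn f)]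
    exact Finset.sum_congr rfl fun e _ => Finset.sum_congr rfl fun d _ => by ring
  have e5 : (∑ f, ∑ e, D.p b e * D.Dg e c f * D.nn f)
      = ∑ e, ∑ d, D.p b e * D.nn d * D.Dg e c d := by
    rw [sum2_swap (fun f e => D.p b e * D.Dg e c f * D.nn f)]
    exact Finset.sum_congr rfl fun e _ => Finset.sum_congr rfl fun d _ => by ring
  rw [e3, e4, e5] at e2
  have hPU := D.PUeq c b
  have hPF := D.PFeq c b
  have hFn := D.Fneq c
  linear_combination e1 + e2 / 2 - hPU / 2 + (D.nn b / 2) * hFn + (D.nn2 / 2) * hPF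

lemma BP (c b d : Fin m) : D.Dp c b d + (∑ f, D.Gam b c f * D.p f d)
    + (∑ f, D.Gam d c f * D.p b f)
    = -(D.nn b * D.nn d * D.Dl2 c) - D.nn b * D.PF c d - D.nn d * D.PF c b := by
  have m1 : (∑ a, ∑ e, D.p b e * D.Dg c e a * D.p a d)
      = ∑ f, ∑ e, D.p b e * D.Dg c e f * D.p f d := rfl
  have e1 : D.Dp c b d = -(∑ f, ∑ e, D.p b e * D.Dg c e f * D.p f d)
      - D.nn b * (∑ e, D.p d e * D.Dl c e) - (∑ e, D.p b e * D.Dl c e) * D.nn d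
      - D.nn b * D.nn d * D.Dl2 c := by
    rw [D.Sp c b d]
    rw [show (∑ a, ∑ e, D.p b e * D.Dg c e a * D.p a d)
        = ∑ f, ∑ e, D.p b e * D.Dg c e f * D.p f d from rfl]
    rw [show (∑ a, D.Dl c a * D.p a d) = ∑ e, D.p d e * D.Dl c e from
      Finset.sum_congr rfl fun e _ => by rw [D.hp d e]; ring]
  have hGam1 : ∀ f, 2 * (D.Gam b c f * D.p f d)
      = (∑ e, (D.p b e * D.Dg c f e * D.p f d + D.p b e * D.Dg f c e * D.p f d
          - D.p b e * D.Dg e c f * D.p f d))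
        + D.nn b * (D.p d f * D.Dl c f + D.p d f * D.Dl f c) := by
    intro f
    unfold Gam
    rw [show (∑ e, (D.p b e * D.Dg c f e * D.p f d + D.p b e * D.Dg f c e * D.p f d
          - D.p b e * D.Dg e c f * D.p f d))
        = (∑ e, D.p b e * (D.Dg c f e + D.Dg f c e - D.Dg e c f)) * D.p f d by
      rw [Finset.sum_mul]; exact Finset.sum_congr rfl fun e _ => by ring]
    rw [D.hp f d]
    ring
  have hGam2 : ∀ f, 2 * (D.Gam d c f * D.p b f)
      = (∑ e, (D.p d e * D.Dg c f e * D.p b f + D.p d e * D.Dg f c e * D.p b f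
          - D.p d e * D.Dg e c f * D.p b f))
        + D.nn d * (D.p b f * D.Dl c f + D.p b f * D.Dl f c) := by
    intro f
    unfold Gam
    rw [show (∑ e, (D.p d e * D.Dg c f e * D.p b f + D.p d e * D.Dg f c e * D.p b f
          - D.p d e * D.Dg e c f * D.p b f))
        = (∑ e, D.p d e * (D.Dg c f e + D.Dg f c e - D.Dg e c f)) * D.p b f by
      rw [Finset.sum_mul]; exact Finset.sum_congr rfl fun e _ => by ring]
    ring
  have e2 : 2 * (∑ f, D.Gam b c f * D.p f d)
      = ((∑ f, ∑ e, D.p b e * D.Dg c f e * D.p f d)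
          + (∑ f, ∑ e, D.p b e * D.Dg f c e * D.p f d)
          - (∑ f, ∑ e, D.p b e * D.Dg e c f * D.p f d))
        + D.nn b * ((∑ f, D.p d f * D.Dl c f) + (∑ f, D.p d f * D.Dl f c)) := by
    rw [Finset.mul_sum, Finset.sum_congr rfl fun f _ => hGam1 f]
    simp only [Finset.sum_add_distrib, Finset.sum_sub_distrib]
    rw [← Finset.mul_sum, Finset.sum_add_distrib]
  have e4 : 2 * (∑ f, D.Gam d c f * D.p b f)
      = ((∑ f, ∑ e, D.p d e * D.Dg c f e * D.p b f)
          + (∑ f, ∑ e, D.p d e * D.Dg f c e * D.p b f)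
          - (∑ f, ∑ e, D.p d e * D.Dg e c f * D.p b f))
        + D.nn d * ((∑ f, D.p b f * D.Dl c f) + (∑ f, D.p b f * D.Dl f c)) := by
    rw [Finset.mul_sum, Finset.sum_congr rfl fun f _ => hGam2 f]
    simp only [Finset.sum_add_distrib, Finset.sum_sub_distrib]
    rw [← Finset.mul_sum, Finset.sum_add_distrib]
  have e3 : (∑ f, ∑ e, D.p b e * D.Dg c f e * D.p f d)
      = ∑ f, ∑ e, D.p b e * D.Dg c e f * D.p f d :=
    Finset.sum_congr rfl fun f _ => Finset.sum_congr rfl fun e _ => by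
      rw [D.hDg c f e]
  have e5 : (∑ f, ∑ e, D.p d e * D.Dg c f e * D.p b f)
      = ∑ f, ∑ e, D.p b e * D.Dg c e f * D.p f d := by
    rw [sum2_swap (fun f e => D.p d e * D.Dg c f e * D.p b f)]
    refine Finset.sum_congr rfl fun f _ => Finset.sum_congr rfl fun e _ => ?_
    rw [D.hDg c e f, D.hp d f]
    ring
  have e6 : (∑ f, ∑ e, D.p d e * D.Dg f c e * D.p b f)
      = ∑ f, ∑ e, D.p b e * D.Dg e c f * D.p f d := by
    rw [sum2_swap (fun f e => D.p d e * D.Dg f c e * D.p b f)]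
    refine Finset.sum_congr rfl fun f _ => Finset.sum_congr rfl fun e _ => ?_
    rw [D.hp d f]
    ring
  have e7 : (∑ f, ∑ e, D.p d e * D.Dg e c f * D.p b f)
      = ∑ f, ∑ e, D.p b e * D.Dg f c e * D.p f d := by
    rw [sum2_swap (fun f e => D.p d e * D.Dg e c f * D.p b f)]
    refine Finset.sum_congr rfl fun f _ => Finset.sum_congr rfl fun e _ => ?_
    rw [D.hp d f]
    ring
  rw [e3] at e2
  rw [e5, e6, e7] at e4
  have e8 := D.PFeq c d
  have e9 := D.PFeq c b
  linear_combination e1 + e2 / 2 + e4 / 2 + (D.nn b / 2) * e8 + (D.nn d / 2) * e9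

lemma sum_sym_antisym (A B : Fin m → Fin m → ℝ) (hA : ∀ a b, A a b = A b a)
    (hB : ∀ a b, B a b = - B b a) : ∑ a, ∑ b, A a b * B a b = 0 := by
  have h : (∑ a, ∑ b, A a b * B a b) = - ∑ a, ∑ b, A a b * B a b := by
    nth_rewrite 2 [Finset.sum_comm]
    rw [← Finset.sum_neg_distrib]
    refine Finset.sum_congr rfl fun a _ => ?_
    rw [← Finset.sum_neg_distrib]
    refine Finset.sum_congr rfl fun b _ => ?_
    rw [hA a b, hB a b]; ring
  linarith

lemma PFtrace : ∑ d, D.PF d d = 0 := by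
  unfold PF
  exact sum_sym_antisym D.p D.F D.hp D.Fantisym

lemma nFntrace : ∑ d, D.nn d * D.Fn d = 0 := by
  have h : ∀ d, D.nn d * D.Fn d = ∑ f, (D.nn d * D.nn f) * D.F d f := by
    intro d
    unfold Fn
    rw [Finset.mul_sum]
    exact Finset.sum_congr rfl fun f _ => by ring
  rw [Finset.sum_congr rfl fun d _ => h d]
  exact sum_sym_antisym (fun a b => D.nn a * D.nn b) D.F (fun a b => by ring) D.Fantisym

/-- Assembly for identity (1). -/
lemma A1 (c b d : Fin m) :
    (D.nn2 * D.Dp c b d + D.p b d * D.Dn2 c - (D.nn b * D.Dn c d + D.nn d * D.Dn c b))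
      + (∑ f, D.Gam b c f * (D.nn2 * D.p f d - D.nn f * D.nn d))
      + (∑ f, D.Gam d c f * (D.nn2 * D.p b f - D.nn b * D.nn f))
    = -((D.nn2 * D.p b d - D.nn b * D.nn d)
          * (2 * (∑ f, D.F c f * D.nn f) + D.nn2 * D.Dl2 c))
      + ∑ f, D.U c f * (2 * D.nn f * D.p b d - D.p b f * D.nn d - D.p d f * D.nn b) := by
  have hs1 : (∑ f, D.Gam b c f * (D.nn2 * D.p f d - D.nn f * D.nn d))
      = D.nn2 * (∑ f, D.Gam b c f * D.p f d) - D.nn d * (∑ f, D.Gam b c f * D.nn f) := by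
    rw [Finset.mul_sum, Finset.mul_sum, ← Finset.sum_sub_distrib]
    exact Finset.sum_congr rfl fun f _ => by ring
  have hs2 : (∑ f, D.Gam d c f * (D.nn2 * D.p b f - D.nn b * D.nn f))
      = D.nn2 * (∑ f, D.Gam d c f * D.p b f) - D.nn b * (∑ f, D.Gam d c f * D.nn f) := by
    rw [Finset.mul_sum, Finset.mul_sum, ← Finset.sum_sub_distrib]
    exact Finset.sum_congr rfl fun f _ => by ring
  have hU : (∑ f, D.U c f * (2 * D.nn f * D.p b d - D.p b f * D.nn d - D.p d f * D.nn b))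
      = 2 * D.p b d * D.tU c - D.nn d * D.PU c b - D.nn b * D.PU c d := by
    unfold tU PU
    rw [Finset.mul_sum, Finset.mul_sum, Finset.mul_sum, ← Finset.sum_sub_distrib,
      ← Finset.sum_sub_distrib]
    exact Finset.sum_congr rfl fun f _ => by ring
  have hFn : (∑ f, D.F c f * D.nn f) = D.Fn c := rfl
  have b2 := D.Bn2 c
  unfold s at b2
  have bb := D.Bn c b
  have bd := D.Bn c d
  have bp := D.BP c b d
  rw [hs1, hs2, hU, hFn]
  linear_combination D.p b d * b2 + D.nn2 * bp - D.nn d * bb - D.nn b * bd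

/-- Assembly for identity (2). -/
lemma A2 (b c : Fin m) :
    (∑ d, ((D.p b d * D.Dn d c + D.nn c * D.Dp d b d
        - (D.p b c * D.Dn d d + D.nn d * D.Dp d b c))
      + (∑ f, D.Gam b d f * (D.p f d * D.nn c - D.p f c * D.nn d))
      + (∑ f, D.Gam d d f * (D.p b f * D.nn c - D.p b c * D.nn f))
      + (∑ f, D.Gam c d f * (D.p b d * D.nn f - D.p b f * D.nn d))))
    = (∑ d, D.nn2 * D.Dl2 d * (D.p b c * D.nn d - D.p b d * D.nn c))
      + (∑ d, ∑ f, D.F d f * (D.nn b * D.nn d * D.p c f - D.p b d * D.nn c * D.nn f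
          - D.nn2 * D.p b d * D.p c f))
      + (∑ d, ∑ f, D.U d f * (D.p b d * D.p c f - D.p b c * D.p d f)) := by
  have key : ∀ d,
      (D.p b d * D.Dn d c + D.nn c * D.Dp d b d
        - (D.p b c * D.Dn d d + D.nn d * D.Dp d b c))
      + (∑ f, D.Gam b d f * (D.p f d * D.nn c - D.p f c * D.nn d))
      + (∑ f, D.Gam d d f * (D.p b f * D.nn c - D.p b c * D.nn f))
      + (∑ f, D.Gam c d f * (D.p b d * D.nn f - D.p b f * D.nn d))
      = (D.nn2 * D.Dl2 d * (D.p b c * D.nn d - D.p b d * D.nn c)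
          + (D.nn b * D.nn d * D.PF d c - D.p b d * D.nn c * D.Fn d
            - D.nn2 * D.p b d * D.PF d c)
          + (D.p b d * D.PU d c - D.p b c * D.PU d d))
        + ((D.nn2 * D.p b c - D.nn b * D.nn c) * D.PF d d + D.p b c * (D.nn d * D.Fn d)) := by
    intro d
    have hs1 : (∑ f, D.Gam b d f * (D.p f d * D.nn c - D.p f c * D.nn d))
        = D.nn c * (∑ f, D.Gam b d f * D.p f d) - D.nn d * (∑ f, D.Gam b d f * D.p f c) := by
      rw [Finset.mul_sum, Finset.mul_sum, ← Finset.sum_sub_distrib]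
      exact Finset.sum_congr rfl fun f _ => by ring
    have hs2 : (∑ f, D.Gam d d f * (D.p b f * D.nn c - D.p b c * D.nn f))
        = D.nn c * (∑ f, D.Gam d d f * D.p b f) - D.p b c * (∑ f, D.Gam d d f * D.nn f) := by
      rw [Finset.mul_sum, Finset.mul_sum, ← Finset.sum_sub_distrib]
      exact Finset.sum_congr rfl fun f _ => by ring
    have hs3 : (∑ f, D.Gam c d f * (D.p b d * D.nn f - D.p b f * D.nn d))
        = D.p b d * (∑ f, D.Gam c d f * D.nn f) - D.nn d * (∑ f, D.Gam c d f * D.p b f) := by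
      rw [Finset.mul_sum, Finset.mul_sum, ← Finset.sum_sub_distrib]
      exact Finset.sum_congr rfl fun f _ => by ring
    have hbp1 := D.BP d b d
    have hbp2 := D.BP d b c
    have hbn1 := D.Bn d c
    have hbn2 := D.Bn d d
    rw [hs1, hs2, hs3]
    linear_combination D.nn c * hbp1 + D.p b d * hbn1 - D.nn d * hbp2 - D.p b c * hbn2
  rw [Finset.sum_congr rfl fun d _ => key d]
  rw [Finset.sum_add_distrib]
  have hz : (∑ d, ((D.nn2 * D.p b c - D.nn b * D.nn c) * D.PF d d
      + D.p b c * (D.nn d * D.Fn d))) = 0 := by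
    rw [Finset.sum_add_distrib, ← Finset.mul_sum, ← Finset.mul_sum, D.PFtrace, D.nFntrace]
    ring
  rw [hz, add_zero]
  rw [Finset.sum_add_distrib, Finset.sum_add_distrib]
  congr 1
  · congr 1
    refine Finset.sum_congr rfl fun d _ => ?_
    have h1 : D.nn b * D.nn d * D.PF d c = ∑ f, D.F d f * (D.nn b * D.nn d * D.p c f) := by
      unfold PF
      rw [Finset.mul_sum]
      exact Finset.sum_congr rfl fun f _ => by ring
    have h2 : D.p b d * D.nn c * D.Fn d = ∑ f, D.F d f * (D.p b d * D.nn c * D.nn f) := by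
      unfold Fn
      rw [Finset.mul_sum]
      exact Finset.sum_congr rfl fun f _ => by ring
    have h3 : D.nn2 * D.p b d * D.PF d c = ∑ f, D.F d f * (D.nn2 * D.p b d * D.p c f) := by
      unfold PF
      rw [Finset.mul_sum]
      exact Finset.sum_congr rfl fun f _ => by ring
    rw [h1, h2, h3, ← Finset.sum_sub_distrib, ← Finset.sum_sub_distrib]
    exact Finset.sum_congr rfl fun f _ => by ring
  · refine Finset.sum_congr rfl fun d _ => ?_
    have h1 : D.p b d * D.PU d c = ∑ f, D.U d f * (D.p b d * D.p c f) := by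
      unfold PU
      rw [Finset.mul_sum]
      exact Finset.sum_congr rfl fun f _ => by ring
    have h2 : D.p b c * D.PU d d = ∑ f, D.U d f * (D.p b c * D.p d f) := by
      unfold PU
      rw [Finset.mul_sum]
      exact Finset.sum_congr rfl fun f _ => by ring
    rw [h1, h2, ← Finset.sum_sub_distrib]
    exact Finset.sum_congr rfl fun f _ => by ring

/-- Tm b d = n2 P^{bd} - n^b n^d -/
def Tm (b d : Fin m) : ℝ := D.nn2 * D.p b d - D.nn b * D.nn d
/-- pd of the Tm field -/
def DT (e b d : Fin m) : ℝ :=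
  D.nn2 * D.Dp e b d + D.p b d * D.Dn2 e - (D.nn b * D.Dn e d + D.nn d * D.Dn e b)

lemma A1' (c b d : Fin m) :
    D.DT c b d + (∑ f, D.Gam b c f * D.Tm f d) + (∑ f, D.Gam d c f * D.Tm b f)
    = -(D.Tm b d * (2 * (∑ f, D.F c f * D.nn f) + D.nn2 * D.Dl2 c))
      + ∑ f, D.U c f * (2 * D.nn f * D.p b d - D.p b f * D.nn d - D.p d f * D.nn b) :=
  D.A1 c b d

end PD

lemma sum_kd_mul' {m : ℕ} (a : Fin m) (f : Fin m → ℝ) : ∑ b, kd b a * f b = f a := by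
  rw [Finset.sum_congr rfl fun b _ => by rw [kd_symm b a]]
  exact sum_kd_mul a f

lemma sum3_rot {m : ℕ} (F : Fin m → Fin m → Fin m → ℝ) :
    (∑ a, ∑ b, ∑ c, F a b c) = ∑ b, ∑ c, ∑ a, F a b c := by
  rw [Finset.sum_comm]
  exact Finset.sum_congr rfl fun b _ => Finset.sum_comm


lemma sum4_rot {m : ℕ} (F : Fin m → Fin m → Fin m → Fin m → ℝ) :
    (∑ a, ∑ b, ∑ c, ∑ d, F a b c d) = ∑ b, ∑ c, ∑ d, ∑ a, F a b c d := by
  rw [Finset.sum_comm]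
  refine Finset.sum_congr rfl fun b _ => ?_
  rw [Finset.sum_comm]
  exact Finset.sum_congr rfl fun c _ => Finset.sum_comm

lemma sum3_comm23 {m : ℕ} (F : Fin m → Fin m → Fin m → ℝ) :
    (∑ a, ∑ b, ∑ c, F a b c) = ∑ a, ∑ c, ∑ b, F a b c :=
  Finset.sum_congr rfl fun a _ => Finset.sum_comm

namespace PD
variable (D : PD m)

/-- Assembly for identity (3). -/
lemma A3 (z : Fin m → Fin m → ℝ) (Dz : Fin m → Fin m → Fin m → ℝ)
    (hz : ∀ a b, z a b = z b a) (c : Fin m) :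
    (∑ b, ∑ d, ((Dz d b c - (∑ e, D.Gam e d b * z e c) - (∑ e, D.Gam e d c * z b e))
        - (Dz c b d - (∑ e, D.Gam e c b * z e d) - (∑ e, D.Gam e c d * z b e))) * D.Tm b d)
    = (∑ f, ((∑ b, ∑ d, (D.Tm b d * (kd f d * Dz f b c - kd f c * Dz f b d)
            + (kd f d * z b c - kd f c * z b d) * D.DT f b d))
          + (∑ d, D.Gam f f d
              * (∑ b', ∑ d', D.Tm b' d' * (kd d d' * z b' c - kd d c * z b' d')))
          - (∑ d, D.Gam d f c
              * (∑ b', ∑ d', D.Tm b' d' * (kd f d' * z b' d - kd f d * z b' d')))))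
      + (∑ b, ∑ d, D.Tm b d * (z b c * (2 * (∑ f, D.F d f * D.nn f) + D.nn2 * D.Dl2 d)
          - z b d * (2 * (∑ f, D.F c f * D.nn f) + D.nn2 * D.Dl2 c)))
      + (∑ b, ∑ d, ∑ f, (D.p d f * D.nn b - D.p b d * D.nn f)
          * (z b c * D.U d f - 2 * z b d * D.U c f)) := by
  have hS : ∀ f' c', (∑ b', ∑ d', D.Tm b' d' * (kd f' d' * z b' c' - kd f' c' * z b' d'))
      = (∑ b', D.Tm b' f' * z b' c') - kd f' c' * (∑ b', ∑ d', D.Tm b' d' * z b' d') := by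
    intro f' c'
    have hb : ∀ b', (∑ d', D.Tm b' d' * (kd f' d' * z b' c' - kd f' c' * z b' d'))
        = D.Tm b' f' * z b' c' - kd f' c' * (∑ d', D.Tm b' d' * z b' d') := by
      intro b'
      calc (∑ d', D.Tm b' d' * (kd f' d' * z b' c' - kd f' c' * z b' d'))
          = ∑ d', (kd f' d' * (D.Tm b' d' * z b' c') - kd f' c' * (D.Tm b' d' * z b' d')) :=
            Finset.sum_congr rfl fun d' _ => by ring
        _ = (∑ d', kd f' d' * (D.Tm b' d' * z b' c'))
              - kd f' c' * (∑ d', D.Tm b' d' * z b' d') := by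
            rw [Finset.sum_sub_distrib, ← Finset.mul_sum]
        _ = D.Tm b' f' * z b' c' - kd f' c' * (∑ d', D.Tm b' d' * z b' d') := by
            rw [sum_kd_mul]
    rw [Finset.sum_congr rfl fun b' _ => hb b', Finset.sum_sub_distrib, ← Finset.mul_sum]
  have hpd : ∀ f, (∑ b, ∑ d, (D.Tm b d * (kd f d * Dz f b c - kd f c * Dz f b d)
        + (kd f d * z b c - kd f c * z b d) * D.DT f b d))
      = ((∑ b, (D.Tm b f * Dz f b c + z b c * D.DT f b f))
          - kd f c * (∑ b, ∑ d, (D.Tm b d * Dz f b d + z b d * D.DT f b d))) := by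
    intro f
    have hb : ∀ b, (∑ d, (D.Tm b d * (kd f d * Dz f b c - kd f c * Dz f b d)
          + (kd f d * z b c - kd f c * z b d) * D.DT f b d))
        = (D.Tm b f * Dz f b c + z b c * D.DT f b f)
          - kd f c * (∑ d, (D.Tm b d * Dz f b d + z b d * D.DT f b d)) := by
      intro b
      calc (∑ d, (D.Tm b d * (kd f d * Dz f b c - kd f c * Dz f b d)
            + (kd f d * z b c - kd f c * z b d) * D.DT f b d))
          = ∑ d, (kd f d * (D.Tm b d * Dz f b c + z b c * D.DT f b d)
              - kd f c * (D.Tm b d * Dz f b d + z b d * D.DT f b d)) :=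
            Finset.sum_congr rfl fun d _ => by ring
        _ = (∑ d, kd f d * (D.Tm b d * Dz f b c + z b c * D.DT f b d))
              - kd f c * (∑ d, (D.Tm b d * Dz f b d + z b d * D.DT f b d)) := by
            rw [Finset.sum_sub_distrib, ← Finset.mul_sum]
        _ = _ := by rw [sum_kd_mul]
    rw [Finset.sum_congr rfl fun b _ => hb b, Finset.sum_sub_distrib, ← Finset.mul_sum]
  -- flatten the f-th term of term1 completely
  have hf : ∀ f, ((∑ b, ∑ d, (D.Tm b d * (kd f d * Dz f b c - kd f c * Dz f b d)
        + (kd f d * z b c - kd f c * z b d) * D.DT f b d))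
      + (∑ d, D.Gam f f d
          * (∑ b', ∑ d', D.Tm b' d' * (kd d d' * z b' c - kd d c * z b' d')))
      - (∑ d, D.Gam d f c
          * (∑ b', ∑ d', D.Tm b' d' * (kd f d' * z b' d - kd f d * z b' d'))))
      = ((∑ b, (D.Tm b f * Dz f b c + z b c * D.DT f b f))
          - kd f c * (∑ b, ∑ d, (D.Tm b d * Dz f b d + z b d * D.DT f b d)))
        + (∑ d, D.Gam f f d * (∑ b', D.Tm b' d * z b' c))
        - (∑ d, D.Gam d f c * (∑ b', D.Tm b' f * z b' d)) := by
    intro f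
    rw [hpd f]
    have h1 : (∑ d, D.Gam f f d
          * (∑ b', ∑ d', D.Tm b' d' * (kd d d' * z b' c - kd d c * z b' d')))
        = (∑ d, D.Gam f f d * (∑ b', D.Tm b' d * z b' c))
          - D.Gam f f c * (∑ b', ∑ d', D.Tm b' d' * z b' d') := by
      rw [Finset.sum_congr rfl fun d _ => by rw [hS d c]]
      rw [show (∑ d, D.Gam f f d * ((∑ b', D.Tm b' d * z b' c)
          - kd d c * (∑ b', ∑ d', D.Tm b' d' * z b' d')))
        = ∑ d, (D.Gam f f d * (∑ b', D.Tm b' d * z b' c)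
          - kd d c * (D.Gam f f d * (∑ b', ∑ d', D.Tm b' d' * z b' d'))) from
        Finset.sum_congr rfl fun d _ => by ring]
      rw [Finset.sum_sub_distrib, sum_kd_mul' c]
    have h2 : (∑ d, D.Gam d f c
          * (∑ b', ∑ d', D.Tm b' d' * (kd f d' * z b' d - kd f d * z b' d')))
        = (∑ d, D.Gam d f c * (∑ b', D.Tm b' f * z b' d))
          - D.Gam f f c * (∑ b', ∑ d', D.Tm b' d' * z b' d') := by
      rw [Finset.sum_congr rfl fun d _ => by rw [hS f d]]
      rw [show (∑ d, D.Gam d f c * ((∑ b', D.Tm b' f * z b' d)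
          - kd f d * (∑ b', ∑ d', D.Tm b' d' * z b' d')))
        = ∑ d, (D.Gam d f c * (∑ b', D.Tm b' f * z b' d)
          - kd f d * (D.Gam d f c * (∑ b', ∑ d', D.Tm b' d' * z b' d'))) from
        Finset.sum_congr rfl fun d _ => by ring]
      rw [Finset.sum_sub_distrib, sum_kd_mul f]
    rw [h1, h2]
    ring
  have hterm1 : (∑ f, ((∑ b, ∑ d, (D.Tm b d * (kd f d * Dz f b c - kd f c * Dz f b d)
          + (kd f d * z b c - kd f c * z b d) * D.DT f b d))
        + (∑ d, D.Gam f f d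
            * (∑ b', ∑ d', D.Tm b' d' * (kd d d' * z b' c - kd d c * z b' d')))
        - (∑ d, D.Gam d f c
            * (∑ b', ∑ d', D.Tm b' d' * (kd f d' * z b' d - kd f d * z b' d')))))
      = (∑ f, ∑ b, (D.Tm b f * Dz f b c + z b c * D.DT f b f))
        - (∑ b, ∑ d, (D.Tm b d * Dz c b d + z b d * D.DT c b d))
        + (∑ f, ∑ d, D.Gam f f d * (∑ b', D.Tm b' d * z b' c))
        - (∑ f, ∑ d, D.Gam d f c * (∑ b', D.Tm b' f * z b' d)) := by
    rw [Finset.sum_congr rfl fun f _ => hf f]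
    rw [Finset.sum_sub_distrib, Finset.sum_add_distrib, Finset.sum_sub_distrib]
    rw [sum_kd_mul' c (fun f => (∑ b, ∑ d, (D.Tm b d * Dz f b d + z b d * D.DT f b d)))]
  rw [hterm1]
  have hLHS : (∑ b, ∑ d, ((Dz d b c - (∑ e, D.Gam e d b * z e c) - (∑ e, D.Gam e d c * z b e))
        - (Dz c b d - (∑ e, D.Gam e c b * z e d) - (∑ e, D.Gam e c d * z b e))) * D.Tm b d)
      = (∑ b, ∑ d, Dz d b c * D.Tm b d)
        - (∑ b, ∑ d, (∑ e, D.Gam e d b * z e c) * D.Tm b d)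
        - (∑ b, ∑ d, (∑ e, D.Gam e d c * z b e) * D.Tm b d)
        - (∑ b, ∑ d, Dz c b d * D.Tm b d)
        + (∑ b, ∑ d, (∑ e, D.Gam e c b * z e d) * D.Tm b d)
        + (∑ b, ∑ d, (∑ e, D.Gam e c d * z b e) * D.Tm b d) := by
    simp only [← Finset.sum_sub_distrib, ← Finset.sum_add_distrib]
    exact Finset.sum_congr rfl fun b _ => Finset.sum_congr rfl fun d _ => by ring
  rw [hLHS]
  have M1 : (∑ f, ∑ b, (D.Tm b f * Dz f b c + z b c * D.DT f b f))
      = (∑ b, ∑ d, Dz d b c * D.Tm b d) + (∑ f, ∑ b, z b c * D.DT f b f) := by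
    rw [show (∑ b, ∑ d, Dz d b c * D.Tm b d) = ∑ d, ∑ b, Dz d b c * D.Tm b d from
      Finset.sum_comm]
    rw [← Finset.sum_add_distrib]
    refine Finset.sum_congr rfl fun f _ => ?_
    rw [← Finset.sum_add_distrib]
    exact Finset.sum_congr rfl fun b _ => by ring
  have M2 : (∑ b, ∑ d, (D.Tm b d * Dz c b d + z b d * D.DT c b d))
      = (∑ b, ∑ d, Dz c b d * D.Tm b d) + (∑ b, ∑ d, z b d * D.DT c b d) := by
    simp only [← Finset.sum_add_distrib]
    exact Finset.sum_congr rfl fun b _ => Finset.sum_congr rfl fun d _ => by ring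
  rw [M1, M2]
  have M3 : (∑ f, ∑ d, D.Gam d f c * (∑ b', D.Tm b' f * z b' d))
      = (∑ b, ∑ d, (∑ e, D.Gam e d c * z b e) * D.Tm b d) := by
    have l : (∑ f, ∑ d, D.Gam d f c * (∑ b', D.Tm b' f * z b' d))
        = ∑ f, ∑ d, ∑ b', D.Gam d f c * (D.Tm b' f * z b' d) :=
      Finset.sum_congr rfl fun f _ => Finset.sum_congr rfl fun d _ => Finset.mul_sum ..
    have r : (∑ b, ∑ d, (∑ e, D.Gam e d c * z b e) * D.Tm b d)
        = ∑ b, ∑ d, ∑ e, D.Gam e d c * z b e * D.Tm b d :=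
      Finset.sum_congr rfl fun b _ => Finset.sum_congr rfl fun d _ => Finset.sum_mul ..
    rw [l, r]
    rw [sum3_rot (fun f d b' => D.Gam d f c * (D.Tm b' f * z b' d))]
    rw [sum3_rot (fun d b' f => D.Gam d f c * (D.Tm b' f * z b' d))]
    exact Finset.sum_congr rfl fun b _ => Finset.sum_congr rfl fun f _ =>
      Finset.sum_congr rfl fun d _ => by ring
  have M4 : (∑ f, ∑ d, D.Gam f f d * (∑ b', D.Tm b' d * z b' c))
      = ∑ f, ∑ b, (∑ e, D.Gam f f e * D.Tm b e) * z b c := by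
    refine Finset.sum_congr rfl fun f _ => ?_
    have l : (∑ d, D.Gam f f d * (∑ b', D.Tm b' d * z b' c))
        = ∑ d, ∑ b', D.Gam f f d * (D.Tm b' d * z b' c) :=
      Finset.sum_congr rfl fun d _ => Finset.mul_sum ..
    have r : (∑ b, (∑ e, D.Gam f f e * D.Tm b e) * z b c)
        = ∑ b, ∑ e, D.Gam f f e * D.Tm b e * z b c :=
      Finset.sum_congr rfl fun b _ => Finset.sum_mul ..
    rw [l, r, Finset.sum_comm]
    exact Finset.sum_congr rfl fun b _ => Finset.sum_congr rfl fun d _ => by ring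
  have M5 : (∑ b, ∑ d, (∑ e, D.Gam e d b * z e c) * D.Tm b d)
      = ∑ f, ∑ b, (∑ e, D.Gam b f e * D.Tm e f) * z b c := by
    have l : (∑ b, ∑ d, (∑ e, D.Gam e d b * z e c) * D.Tm b d)
        = ∑ b, ∑ d, ∑ e, D.Gam e d b * z e c * D.Tm b d :=
      Finset.sum_congr rfl fun b _ => Finset.sum_congr rfl fun d _ => Finset.sum_mul ..
    have r : (∑ f, ∑ b, (∑ e, D.Gam b f e * D.Tm e f) * z b c)
        = ∑ f, ∑ b, ∑ e, D.Gam b f e * D.Tm e f * z b c :=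
      Finset.sum_congr rfl fun f _ => Finset.sum_congr rfl fun b _ => Finset.sum_mul ..
    rw [l, r]
    rw [sum3_rot (fun b d e => D.Gam e d b * z e c * D.Tm b d)]
    exact Finset.sum_congr rfl fun f _ => Finset.sum_congr rfl fun b _ =>
      Finset.sum_congr rfl fun e _ => by ring
  have M6 : (∑ b, ∑ d, (∑ e, D.Gam e c b * z e d) * D.Tm b d)
      = ∑ b, ∑ d, (∑ e, D.Gam b c e * D.Tm e d) * z b d := by
    have l : (∑ b, ∑ d, (∑ e, D.Gam e c b * z e d) * D.Tm b d)
        = ∑ b, ∑ d, ∑ e, D.Gam e c b * z e d * D.Tm b d :=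
      Finset.sum_congr rfl fun b _ => Finset.sum_congr rfl fun d _ => Finset.sum_mul ..
    have r : (∑ b, ∑ d, (∑ e, D.Gam b c e * D.Tm e d) * z b d)
        = ∑ b, ∑ d, ∑ e, D.Gam b c e * D.Tm e d * z b d :=
      Finset.sum_congr rfl fun b _ => Finset.sum_congr rfl fun d _ => Finset.sum_mul ..
    rw [l, r]
    rw [sum3_rot (fun b d e => D.Gam e c b * z e d * D.Tm b d)]
    rw [sum3_rot (fun d e b => D.Gam e c b * z e d * D.Tm b d)]
    rw [sum3_comm23 (fun e b d => D.Gam e c b * z e d * D.Tm b d)]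
    exact Finset.sum_congr rfl fun b _ => Finset.sum_congr rfl fun d _ =>
      Finset.sum_congr rfl fun e _ => by ring
  have M7 : (∑ b, ∑ d, (∑ e, D.Gam e c d * z b e) * D.Tm b d)
      = ∑ b, ∑ d, (∑ e, D.Gam d c e * D.Tm b e) * z b d := by
    refine Finset.sum_congr rfl fun b _ => ?_
    have l : (∑ d, (∑ e, D.Gam e c d * z b e) * D.Tm b d)
        = ∑ d, ∑ e, D.Gam e c d * z b e * D.Tm b d :=
      Finset.sum_congr rfl fun d _ => Finset.sum_mul ..
    have r : (∑ d, (∑ e, D.Gam d c e * D.Tm b e) * z b d)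
        = ∑ d, ∑ e, D.Gam d c e * D.Tm b e * z b d :=
      Finset.sum_congr rfl fun d _ => Finset.sum_mul ..
    rw [l, r, Finset.sum_comm]
    exact Finset.sum_congr rfl fun d _ => Finset.sum_congr rfl fun e _ => by ring
  rw [M3, M4, M5, M6, M7]
  -- A1-substitution
  have hC1 : (∑ f, ∑ b, z b c * D.DT f b f) + (∑ f, ∑ b, (∑ e, D.Gam b f e * D.Tm e f) * z b c)
      + (∑ f, ∑ b, (∑ e, D.Gam f f e * D.Tm b e) * z b c)
      = ∑ f, ∑ b, (-(D.Tm b f * (2 * (∑ e, D.F f e * D.nn e) + D.nn2 * D.Dl2 f))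
          + (∑ e, D.U f e
            * (2 * D.nn e * D.p b f - D.p b e * D.nn f - D.p f e * D.nn b))) * z b c := by
    simp only [← Finset.sum_add_distrib]
    refine Finset.sum_congr rfl fun f _ => Finset.sum_congr rfl fun b _ => ?_
    have := D.A1' f b f
    linear_combination z b c * this
  have hC2 : (∑ b, ∑ d, z b d * D.DT c b d) + (∑ b, ∑ d, (∑ e, D.Gam b c e * D.Tm e d) * z b d)
      + (∑ b, ∑ d, (∑ e, D.Gam d c e * D.Tm b e) * z b d)
      = ∑ b, ∑ d, (-(D.Tm b d * (2 * (∑ e, D.F c e * D.nn e) + D.nn2 * D.Dl2 c))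
          + (∑ e, D.U c e
            * (2 * D.nn e * D.p b d - D.p b e * D.nn d - D.p d e * D.nn b))) * z b d := by
    simp only [← Finset.sum_add_distrib]
    refine Finset.sum_congr rfl fun b _ => Finset.sum_congr rfl fun d _ => ?_
    have := D.A1' c b d
    linear_combination z b d * this
  -- split W1, W2
  have hW1 : (∑ f, ∑ b, (-(D.Tm b f * (2 * (∑ e, D.F f e * D.nn e) + D.nn2 * D.Dl2 f))
          + (∑ e, D.U f e
            * (2 * D.nn e * D.p b f - D.p b e * D.nn f - D.p f e * D.nn b))) * z b c)
      = -(∑ f, ∑ b, D.Tm b f * z b c * (2 * (∑ e, D.F f e * D.nn e) + D.nn2 * D.Dl2 f))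
        + (∑ f, ∑ b, (∑ e, D.U f e
            * (2 * D.nn e * D.p b f - D.p b e * D.nn f - D.p f e * D.nn b)) * z b c) := by
    simp only [← Finset.sum_add_distrib, ← Finset.sum_neg_distrib]
    exact Finset.sum_congr rfl fun f _ => Finset.sum_congr rfl fun b _ => by ring
  have hW2 : (∑ b, ∑ d, (-(D.Tm b d * (2 * (∑ e, D.F c e * D.nn e) + D.nn2 * D.Dl2 c))
          + (∑ e, D.U c e
            * (2 * D.nn e * D.p b d - D.p b e * D.nn d - D.p d e * D.nn b))) * z b d)
      = -(∑ b, ∑ d, D.Tm b d * z b d * (2 * (∑ e, D.F c e * D.nn e) + D.nn2 * D.Dl2 c))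
        + (∑ b, ∑ d, (∑ e, D.U c e
            * (2 * D.nn e * D.p b d - D.p b e * D.nn d - D.p d e * D.nn b)) * z b d) := by
    simp only [← Finset.sum_add_distrib, ← Finset.sum_neg_distrib]
    exact Finset.sum_congr rfl fun b _ => Finset.sum_congr rfl fun d _ => by ring
  -- E split
  have hE : (∑ b, ∑ d, D.Tm b d * (z b c * (2 * (∑ f, D.F d f * D.nn f) + D.nn2 * D.Dl2 d)
        - z b d * (2 * (∑ f, D.F c f * D.nn f) + D.nn2 * D.Dl2 c)))
      = (∑ b, ∑ d, D.Tm b d * z b c * (2 * (∑ f, D.F d f * D.nn f) + D.nn2 * D.Dl2 d))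
        - (∑ b, ∑ d, D.Tm b d * z b d * (2 * (∑ f, D.F c f * D.nn f) + D.nn2 * D.Dl2 c)) := by
    simp only [← Finset.sum_sub_distrib]
    exact Finset.sum_congr rfl fun b _ => Finset.sum_congr rfl fun d _ => by ring
  have hE1 : (∑ f, ∑ b, D.Tm b f * z b c * (2 * (∑ e, D.F f e * D.nn e) + D.nn2 * D.Dl2 f))
      = (∑ b, ∑ d, D.Tm b d * z b c * (2 * (∑ f, D.F d f * D.nn f) + D.nn2 * D.Dl2 d)) :=
    Finset.sum_comm
  -- G split
  have hG : (∑ b, ∑ d, ∑ f, (D.p d f * D.nn b - D.p b d * D.nn f)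
        * (z b c * D.U d f - 2 * z b d * D.U c f))
      = (∑ b, ∑ d, ∑ f, (D.p d f * D.nn b - D.p b d * D.nn f) * z b c * D.U d f)
        - (∑ b, ∑ d, ∑ f, (D.p d f * D.nn b - D.p b d * D.nn f) * (2 * z b d) * D.U c f) := by
    simp only [← Finset.sum_sub_distrib]
    exact Finset.sum_congr rfl fun b _ => Finset.sum_congr rfl fun d _ =>
      Finset.sum_congr rfl fun f _ => by ring
  -- vanishing-symmetry identities
  have hVV1 : (∑ f, ∑ b, (∑ e, D.U f e
        * (2 * D.nn e * D.p b f - D.p b e * D.nn f - D.p f e * D.nn b)) * z b c)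
      = -(∑ b, ∑ d, ∑ f, (D.p d f * D.nn b - D.p b d * D.nn f) * z b c * D.U d f) := by
    have perb : ∀ b, (∑ f, (∑ e, D.U f e
          * (2 * D.nn e * D.p b f - D.p b e * D.nn f - D.p f e * D.nn b)) * z b c)
        = -(∑ d, ∑ f, (D.p d f * D.nn b - D.p b d * D.nn f) * z b c * D.U d f) := by
      intro b
      have base : (∑ f, ∑ e, D.U f e
            * (2 * D.nn e * D.p b f - D.p b e * D.nn f - D.p f e * D.nn b))
          + (∑ d, ∑ f, D.U d f * (D.p d f * D.nn b - D.p b d * D.nn f)) = 0 := by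
        rw [← Finset.sum_add_distrib]
        have merge : ∀ d, ((∑ e, D.U d e
              * (2 * D.nn e * D.p b d - D.p b e * D.nn d - D.p d e * D.nn b))
            + (∑ f, D.U d f * (D.p d f * D.nn b - D.p b d * D.nn f)))
            = ∑ f, D.U d f * (D.nn f * D.p b d - D.p b f * D.nn d) := by
          intro d
          rw [← Finset.sum_add_distrib]
          exact Finset.sum_congr rfl fun f _ => by ring
        rw [Finset.sum_congr rfl fun d _ => merge d]
        exact sum_sym_antisym D.U (fun a b' => D.nn b' * D.p b a - D.p b b' * D.nn a)
          D.Usym (fun a b' => by ring)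
      have expand1 : (∑ f, (∑ e, D.U f e
            * (2 * D.nn e * D.p b f - D.p b e * D.nn f - D.p f e * D.nn b)) * z b c)
          = (∑ f, ∑ e, D.U f e
            * (2 * D.nn e * D.p b f - D.p b e * D.nn f - D.p f e * D.nn b)) * z b c :=
        (Finset.sum_mul ..).symm
      have expand2 : (∑ d, ∑ f, (D.p d f * D.nn b - D.p b d * D.nn f) * z b c * D.U d f)
          = (∑ d, ∑ f, D.U d f * (D.p d f * D.nn b - D.p b d * D.nn f)) * z b c := by
        rw [Finset.sum_mul]
        refine Finset.sum_congr rfl fun d _ => ?_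
        rw [Finset.sum_mul]
        exact Finset.sum_congr rfl fun f _ => by ring
      rw [expand1, expand2]
      linear_combination z b c * base
    calc (∑ f, ∑ b, (∑ e, D.U f e
          * (2 * D.nn e * D.p b f - D.p b e * D.nn f - D.p f e * D.nn b)) * z b c)
        = ∑ b, ∑ f, (∑ e, D.U f e
          * (2 * D.nn e * D.p b f - D.p b e * D.nn f - D.p f e * D.nn b)) * z b c :=
          Finset.sum_comm
      _ = ∑ b, -(∑ d, ∑ f, (D.p d f * D.nn b - D.p b d * D.nn f) * z b c * D.U d f) :=
          Finset.sum_congr rfl fun b _ => perb b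
      _ = -(∑ b, ∑ d, ∑ f, (D.p d f * D.nn b - D.p b d * D.nn f) * z b c * D.U d f) := by
          rw [Finset.sum_neg_distrib]
  have hVV2 : (∑ b, ∑ d, (∑ e, D.U c e
        * (2 * D.nn e * D.p b d - D.p b e * D.nn d - D.p d e * D.nn b)) * z b d)
      = -(∑ b, ∑ d, ∑ f, (D.p d f * D.nn b - D.p b d * D.nn f) * (2 * z b d) * D.U c f) := by
    have combine : (∑ b, ∑ d, ((∑ e, D.U c e
          * (2 * D.nn e * D.p b d - D.p b e * D.nn d - D.p d e * D.nn b)) * z b d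
        + (∑ f, (D.p d f * D.nn b - D.p b d * D.nn f) * (2 * z b d) * D.U c f)))
        = ∑ e, D.U c e * (∑ b, ∑ d, z b d * (D.p d e * D.nn b - D.p b e * D.nn d)) := by
      have inner : ∀ b d, ((∑ e, D.U c e
            * (2 * D.nn e * D.p b d - D.p b e * D.nn d - D.p d e * D.nn b)) * z b d
          + (∑ f, (D.p d f * D.nn b - D.p b d * D.nn f) * (2 * z b d) * D.U c f))
          = ∑ e, D.U c e * (z b d * (D.p d e * D.nn b - D.p b e * D.nn d)) := by
        intro b d
        rw [Finset.sum_mul, ← Finset.sum_add_distrib]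
        exact Finset.sum_congr rfl fun e _ => by ring
      rw [Finset.sum_congr rfl fun b _ =>
        Finset.sum_congr rfl fun d _ => inner b d]
      rw [show (∑ b, ∑ d, ∑ e, D.U c e * (z b d * (D.p d e * D.nn b - D.p b e * D.nn d)))
          = ∑ e, ∑ b, ∑ d, D.U c e * (z b d * (D.p d e * D.nn b - D.p b e * D.nn d)) by
        rw [sum3_rot (fun b d e => D.U c e * (z b d * (D.p d e * D.nn b - D.p b e * D.nn d)))]
        rw [sum3_rot (fun d e b => D.U c e * (z b d * (D.p d e * D.nn b - D.p b e * D.nn d)))]]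
      refine Finset.sum_congr rfl fun e _ => ?_
      rw [Finset.mul_sum]
      refine Finset.sum_congr rfl fun b _ => ?_
      rw [Finset.mul_sum]
    have vanish : ∀ e, (∑ b, ∑ d, z b d * (D.p d e * D.nn b - D.p b e * D.nn d)) = 0 := by
      intro e
      exact sum_sym_antisym z (fun b d => D.p d e * D.nn b - D.p b e * D.nn d)
        hz (fun a b' => by ring)
    have hzero : (∑ b, ∑ d, ((∑ e, D.U c e
          * (2 * D.nn e * D.p b d - D.p b e * D.nn d - D.p d e * D.nn b)) * z b d
        + (∑ f, (D.p d f * D.nn b - D.p b d * D.nn f) * (2 * z b d) * D.U c f))) = 0 := by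
      rw [combine]
      rw [Finset.sum_congr rfl fun e _ => by rw [vanish e, mul_zero]]
      exact Finset.sum_const_zero
    simp only [Finset.sum_add_distrib] at hzero
    linarith [hzero]
  linarith [hC1, hC2, hW1, hW2, hE, hE1, hG, hVV1, hVV2]

/-- Assembly for identity (4). -/
lemma A4 (z : Fin m → Fin m → ℝ) (Dz : Fin m → Fin m → Fin m → ℝ)
    (hz : ∀ a b, z a b = z b a) :
    (∑ b, ∑ c, ∑ d, ((Dz d b c - (∑ e, D.Gam e d b * z e c) - (∑ e, D.Gam e d c * z b e))
        - (Dz c b d - (∑ e, D.Gam e c b * z e d) - (∑ e, D.Gam e c d * z b e)))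
        * D.p b d * D.nn c)
    = (∑ d, ((∑ b, ∑ c, ((D.p b d * D.nn c - D.p b c * D.nn d) * Dz d b c
          + z b c * (D.p b d * D.Dn d c + D.nn c * D.Dp d b d
            - (D.p b c * D.Dn d d + D.nn d * D.Dp d b c))))
        + (∑ f, D.Gam d d f * (∑ b, ∑ c, (D.p b f * D.nn c - D.p b c * D.nn f) * z b c))))
      + ∑ b, ∑ c, z b c * ((∑ d, ∑ f, D.U d f * (D.p b c * D.p d f - D.p b d * D.p c f))
          + 2 * (∑ d, ∑ f, D.F d f * D.p b d * D.nn c * D.nn f)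
          + (∑ d, D.nn2 * D.Dl2 d * (D.p b d * D.nn c - D.p b c * D.nn d))) := by
  -- Step 1 : LHS as Q-contraction
  have hsplit : (∑ b, ∑ c, ∑ d,
        ((Dz d b c - (∑ e, D.Gam e d b * z e c) - (∑ e, D.Gam e d c * z b e))
        - (Dz c b d - (∑ e, D.Gam e c b * z e d) - (∑ e, D.Gam e c d * z b e)))
        * D.p b d * D.nn c)
      = (∑ b, ∑ c, ∑ d, (Dz d b c - (∑ e, D.Gam e d b * z e c)
          - (∑ e, D.Gam e d c * z b e)) * D.p b d * D.nn c)
        - (∑ b, ∑ c, ∑ d, (Dz c b d - (∑ e, D.Gam e c b * z e d)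
          - (∑ e, D.Gam e c d * z b e)) * D.p b d * D.nn c) := by
    simp only [← Finset.sum_sub_distrib]
    exact Finset.sum_congr rfl fun b _ => Finset.sum_congr rfl fun c _ =>
      Finset.sum_congr rfl fun d _ => by ring
  have hSB : (∑ b, ∑ c, ∑ d, (Dz c b d - (∑ e, D.Gam e c b * z e d)
        - (∑ e, D.Gam e c d * z b e)) * D.p b d * D.nn c)
      = ∑ b, ∑ c, ∑ d, (Dz d b c - (∑ e, D.Gam e d b * z e c)
        - (∑ e, D.Gam e d c * z b e)) * D.p b c * D.nn d := by
    refine Finset.sum_congr rfl fun b _ => ?_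
    rw [sum2_swap (fun c d => (Dz c b d - (∑ e, D.Gam e c b * z e d)
      - (∑ e, D.Gam e c d * z b e)) * D.p b d * D.nn c)]
  have step1 : (∑ b, ∑ c, ∑ d,
        ((Dz d b c - (∑ e, D.Gam e d b * z e c) - (∑ e, D.Gam e d c * z b e))
        - (Dz c b d - (∑ e, D.Gam e c b * z e d) - (∑ e, D.Gam e c d * z b e)))
        * D.p b d * D.nn c)
      = (∑ b, ∑ c, ∑ d, (D.p b d * D.nn c - D.p b c * D.nn d) * Dz d b c)
        - (∑ b, ∑ c, ∑ d, (D.p b d * D.nn c - D.p b c * D.nn d)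
            * (∑ e, D.Gam e d b * z e c))
        - (∑ b, ∑ c, ∑ d, (D.p b d * D.nn c - D.p b c * D.nn d)
            * (∑ e, D.Gam e d c * z b e)) := by
    rw [hsplit, hSB]
    simp only [← Finset.sum_sub_distrib]
    exact Finset.sum_congr rfl fun b _ => Finset.sum_congr rfl fun c _ =>
      Finset.sum_congr rfl fun d _ => by ring
  rw [step1]
  -- Step 2 : dissect term1
  have match1 : (∑ d, (∑ b, ∑ c, ((D.p b d * D.nn c - D.p b c * D.nn d) * Dz d b c
        + z b c * (D.p b d * D.Dn d c + D.nn c * D.Dp d b d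
          - (D.p b c * D.Dn d d + D.nn d * D.Dp d b c)))))
      = (∑ b, ∑ c, ∑ d, (D.p b d * D.nn c - D.p b c * D.nn d) * Dz d b c)
        + (∑ b, ∑ c, ∑ d, (D.p b d * D.Dn d c + D.nn c * D.Dp d b d
            - (D.p b c * D.Dn d d + D.nn d * D.Dp d b c)) * z b c) := by
    rw [show (∑ d, (∑ b, ∑ c, ((D.p b d * D.nn c - D.p b c * D.nn d) * Dz d b c
        + z b c * (D.p b d * D.Dn d c + D.nn c * D.Dp d b d
          - (D.p b c * D.Dn d d + D.nn d * D.Dp d b c)))))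
      = ∑ b, ∑ c, ∑ d, ((D.p b d * D.nn c - D.p b c * D.nn d) * Dz d b c
        + z b c * (D.p b d * D.Dn d c + D.nn c * D.Dp d b d
          - (D.p b c * D.Dn d d + D.nn d * D.Dp d b c))) by
      rw [sum3_rot (fun d b c => ((D.p b d * D.nn c - D.p b c * D.nn d) * Dz d b c
        + z b c * (D.p b d * D.Dn d c + D.nn c * D.Dp d b d
          - (D.p b c * D.Dn d d + D.nn d * D.Dp d b c))))]]
    simp only [← Finset.sum_add_distrib]
    exact Finset.sum_congr rfl fun b _ => Finset.sum_congr rfl fun c _ =>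
      Finset.sum_congr rfl fun d _ => by ring
  have match2 : (∑ d, (∑ f, D.Gam d d f
        * (∑ b, ∑ c, (D.p b f * D.nn c - D.p b c * D.nn f) * z b c)))
      = ∑ b, ∑ c, ∑ d, (∑ f, D.Gam d d f * (D.p b f * D.nn c - D.p b c * D.nn f)) * z b c := by
    have l : (∑ d, (∑ f, D.Gam d d f
          * (∑ b, ∑ c, (D.p b f * D.nn c - D.p b c * D.nn f) * z b c)))
        = ∑ d, ∑ f, ∑ b, ∑ c, D.Gam d d f * ((D.p b f * D.nn c - D.p b c * D.nn f) * z b c) := by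
      refine Finset.sum_congr rfl fun d _ => Finset.sum_congr rfl fun f _ => ?_
      rw [Finset.mul_sum]
      exact Finset.sum_congr rfl fun b _ => Finset.mul_sum ..
    have r : (∑ b, ∑ c, ∑ d, (∑ f, D.Gam d d f
          * (D.p b f * D.nn c - D.p b c * D.nn f)) * z b c)
        = ∑ b, ∑ c, ∑ d, ∑ f, D.Gam d d f * (D.p b f * D.nn c - D.p b c * D.nn f) * z b c :=
      Finset.sum_congr rfl fun b _ => Finset.sum_congr rfl fun c _ =>
        Finset.sum_congr rfl fun d _ => Finset.sum_mul ..
    rw [l, r]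
    rw [sum4_rot (fun d f b c => D.Gam d d f * ((D.p b f * D.nn c - D.p b c * D.nn f) * z b c))]
    rw [sum4_rot (fun f b c d => D.Gam d d f * ((D.p b f * D.nn c - D.p b c * D.nn f) * z b c))]
    exact Finset.sum_congr rfl fun b _ => Finset.sum_congr rfl fun c _ =>
      Finset.sum_congr rfl fun d _ => Finset.sum_congr rfl fun f _ => by ring
  have match3 : (∑ b, ∑ c, ∑ d, (D.p b d * D.nn c - D.p b c * D.nn d)
        * (∑ e, D.Gam e d b * z e c))
      = ∑ b, ∑ c, ∑ d, (∑ f, D.Gam b d f * (D.p f d * D.nn c - D.p f c * D.nn d)) * z b c := by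
    have l : (∑ b, ∑ c, ∑ d, (D.p b d * D.nn c - D.p b c * D.nn d)
          * (∑ e, D.Gam e d b * z e c))
        = ∑ b, ∑ c, ∑ d, ∑ e, (D.p b d * D.nn c - D.p b c * D.nn d) * (D.Gam e d b * z e c) :=
      Finset.sum_congr rfl fun b _ => Finset.sum_congr rfl fun c _ =>
        Finset.sum_congr rfl fun d _ => Finset.mul_sum ..
    have r : (∑ b, ∑ c, ∑ d, (∑ f, D.Gam b d f
          * (D.p f d * D.nn c - D.p f c * D.nn d)) * z b c)
        = ∑ b, ∑ c, ∑ d, ∑ f, D.Gam b d f * (D.p f d * D.nn c - D.p f c * D.nn d) * z b c :=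
      Finset.sum_congr rfl fun b _ => Finset.sum_congr rfl fun c _ =>
        Finset.sum_congr rfl fun d _ => Finset.sum_mul ..
    rw [l, r]
    -- reorder (b,c,d,e) → (e,c,d,b)
    rw [sum4_rot (fun b c d e =>
      (D.p b d * D.nn c - D.p b c * D.nn d) * (D.Gam e d b * z e c))]
    rw [sum4_rot (fun c d e b =>
      (D.p b d * D.nn c - D.p b c * D.nn d) * (D.Gam e d b * z e c))]
    rw [sum4_rot (fun d e b c =>
      (D.p b d * D.nn c - D.p b c * D.nn d) * (D.Gam e d b * z e c))]
    -- now order (e,b,c,d); rotate inner three (b,c,d) → (c,d,b)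
    refine Finset.sum_congr rfl fun e _ => ?_
    rw [sum3_rot (fun b c d =>
      (D.p b d * D.nn c - D.p b c * D.nn d) * (D.Gam e d b * z e c))]
    exact Finset.sum_congr rfl fun c _ => Finset.sum_congr rfl fun d _ =>
      Finset.sum_congr rfl fun b _ => by ring
  have match4 : (∑ b, ∑ c, ∑ d, (D.p b d * D.nn c - D.p b c * D.nn d)
        * (∑ e, D.Gam e d c * z b e))
      = ∑ b, ∑ c, ∑ d, (∑ f, D.Gam c d f * (D.p b d * D.nn f - D.p b f * D.nn d)) * z b c := by
    have l : (∑ b, ∑ c, ∑ d, (D.p b d * D.nn c - D.p b c * D.nn d)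
          * (∑ e, D.Gam e d c * z b e))
        = ∑ b, ∑ c, ∑ d, ∑ e, (D.p b d * D.nn c - D.p b c * D.nn d) * (D.Gam e d c * z b e) :=
      Finset.sum_congr rfl fun b _ => Finset.sum_congr rfl fun c _ =>
        Finset.sum_congr rfl fun d _ => Finset.mul_sum ..
    have r : (∑ b, ∑ c, ∑ d, (∑ f, D.Gam c d f
          * (D.p b d * D.nn f - D.p b f * D.nn d)) * z b c)
        = ∑ b, ∑ c, ∑ d, ∑ f, D.Gam c d f * (D.p b d * D.nn f - D.p b f * D.nn d) * z b c :=
      Finset.sum_congr rfl fun b _ => Finset.sum_congr rfl fun c _ =>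
        Finset.sum_congr rfl fun d _ => Finset.sum_mul ..
    rw [l, r]
    -- per b : reorder (c,d,e) → (e,d,c)
    refine Finset.sum_congr rfl fun b _ => ?_
    rw [sum3_rot (fun c d e =>
      (D.p b d * D.nn c - D.p b c * D.nn d) * (D.Gam e d c * z b e))]
    rw [sum3_rot (fun d e c =>
      (D.p b d * D.nn c - D.p b c * D.nn d) * (D.Gam e d c * z b e))]
    rw [sum3_comm23 (fun e c d =>
      (D.p b d * D.nn c - D.p b c * D.nn d) * (D.Gam e d c * z b e))]
    exact Finset.sum_congr rfl fun c _ => Finset.sum_congr rfl fun d _ =>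
      Finset.sum_congr rfl fun e _ => by ring
  -- A2 contracted with z
  have hXsplit : (∑ b, ∑ c, (∑ d, ((D.p b d * D.Dn d c + D.nn c * D.Dp d b d
        - (D.p b c * D.Dn d d + D.nn d * D.Dp d b c))
      + (∑ f, D.Gam b d f * (D.p f d * D.nn c - D.p f c * D.nn d))
      + (∑ f, D.Gam d d f * (D.p b f * D.nn c - D.p b c * D.nn f))
      + (∑ f, D.Gam c d f * (D.p b d * D.nn f - D.p b f * D.nn d)))) * z b c)
      = (∑ b, ∑ c, ∑ d, (D.p b d * D.Dn d c + D.nn c * D.Dp d b d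
          - (D.p b c * D.Dn d d + D.nn d * D.Dp d b c)) * z b c)
        + (∑ b, ∑ c, ∑ d, (∑ f, D.Gam b d f
            * (D.p f d * D.nn c - D.p f c * D.nn d)) * z b c)
        + (∑ b, ∑ c, ∑ d, (∑ f, D.Gam d d f
            * (D.p b f * D.nn c - D.p b c * D.nn f)) * z b c)
        + (∑ b, ∑ c, ∑ d, (∑ f, D.Gam c d f
            * (D.p b d * D.nn f - D.p b f * D.nn d)) * z b c) := by
    simp only [← Finset.sum_add_distrib]
    refine Finset.sum_congr rfl fun b _ => Finset.sum_congr rfl fun c _ => ?_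
    rw [Finset.sum_mul]
    exact Finset.sum_congr rfl fun d _ => by ring
  have hA2z : (∑ b, ∑ c, (∑ d, ((D.p b d * D.Dn d c + D.nn c * D.Dp d b d
        - (D.p b c * D.Dn d d + D.nn d * D.Dp d b c))
      + (∑ f, D.Gam b d f * (D.p f d * D.nn c - D.p f c * D.nn d))
      + (∑ f, D.Gam d d f * (D.p b f * D.nn c - D.p b c * D.nn f))
      + (∑ f, D.Gam c d f * (D.p b d * D.nn f - D.p b f * D.nn d)))) * z b c)
      = ∑ b, ∑ c, ((∑ d, D.nn2 * D.Dl2 d * (D.p b c * D.nn d - D.p b d * D.nn c))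
          + (∑ d, ∑ f, D.F d f * (D.nn b * D.nn d * D.p c f - D.p b d * D.nn c * D.nn f
              - D.nn2 * D.p b d * D.p c f))
          + (∑ d, ∑ f, D.U d f * (D.p b d * D.p c f - D.p b c * D.p d f))) * z b c := by
    refine Finset.sum_congr rfl fun b _ => Finset.sum_congr rfl fun c _ => ?_
    rw [D.A2 b c]
  -- final : contracted RHS2 + bracket = 0
  have hfin1 : (∑ b, ∑ c, z b c * (∑ d, ∑ f, D.F d f
        * (D.nn b * D.nn d * D.p c f + D.p b d * D.nn c * D.nn f))) = 0 := by
    refine sum_sym_antisym z _ hz fun b c => ?_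
    calc (∑ d, ∑ f, D.F d f * (D.nn b * D.nn d * D.p c f + D.p b d * D.nn c * D.nn f))
        = ∑ d, ∑ f, -(D.F d f * (D.nn c * D.nn d * D.p b f + D.p c d * D.nn b * D.nn f)) := by
          rw [sum2_swap (fun d f => D.F d f
            * (D.nn b * D.nn d * D.p c f + D.p b d * D.nn c * D.nn f))]
          refine Finset.sum_congr rfl fun d _ => Finset.sum_congr rfl fun f _ => ?_
          rw [D.Fantisym f d]
          ring
      _ = -(∑ d, ∑ f, D.F d f * (D.nn c * D.nn d * D.p b f + D.p c d * D.nn b * D.nn f)) := by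
          simp only [Finset.sum_neg_distrib]
  have hfin2 : (∑ b, ∑ c, z b c * (∑ d, ∑ f, D.F d f
        * (D.nn2 * D.p b d * D.p c f))) = 0 := by
    refine sum_sym_antisym z _ hz fun b c => ?_
    calc (∑ d, ∑ f, D.F d f * (D.nn2 * D.p b d * D.p c f))
        = ∑ d, ∑ f, -(D.F d f * (D.nn2 * D.p c d * D.p b f)) := by
          rw [sum2_swap (fun d f => D.F d f * (D.nn2 * D.p b d * D.p c f))]
          refine Finset.sum_congr rfl fun d _ => Finset.sum_congr rfl fun f _ => ?_
          rw [D.Fantisym f d]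
          ring
      _ = -(∑ d, ∑ f, D.F d f * (D.nn2 * D.p c d * D.p b f)) := by
          simp only [Finset.sum_neg_distrib]
  have percomb : ∀ b c, ((∑ d, D.nn2 * D.Dl2 d * (D.p b c * D.nn d - D.p b d * D.nn c))
        + (∑ d, ∑ f, D.F d f * (D.nn b * D.nn d * D.p c f - D.p b d * D.nn c * D.nn f
            - D.nn2 * D.p b d * D.p c f))
        + (∑ d, ∑ f, D.U d f * (D.p b d * D.p c f - D.p b c * D.p d f))) * z b c
      + z b c * ((∑ d, ∑ f, D.U d f * (D.p b c * D.p d f - D.p b d * D.p c f))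
          + 2 * (∑ d, ∑ f, D.F d f * D.p b d * D.nn c * D.nn f)
          + (∑ d, D.nn2 * D.Dl2 d * (D.p b d * D.nn c - D.p b c * D.nn d)))
      = z b c * (∑ d, ∑ f, D.F d f
          * (D.nn b * D.nn d * D.p c f + D.p b d * D.nn c * D.nn f))
        - z b c * (∑ d, ∑ f, D.F d f * (D.nn2 * D.p b d * D.p c f)) := by
    intro b c
    have m1 : (∑ d, D.nn2 * D.Dl2 d * (D.p b c * D.nn d - D.p b d * D.nn c))
        + (∑ d, D.nn2 * D.Dl2 d * (D.p b d * D.nn c - D.p b c * D.nn d)) = 0 := by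
      rw [← Finset.sum_add_distrib]
      exact Finset.sum_eq_zero fun d _ => by ring
    have m2 : (∑ d, ∑ f, D.U d f * (D.p b d * D.p c f - D.p b c * D.p d f))
        + (∑ d, ∑ f, D.U d f * (D.p b c * D.p d f - D.p b d * D.p c f)) = 0 := by
      rw [← Finset.sum_add_distrib]
      exact Finset.sum_eq_zero fun d _ => by
        rw [← Finset.sum_add_distrib]
        exact Finset.sum_eq_zero fun f _ => by ring
    have m3 : (∑ d, ∑ f, D.F d f * (D.nn b * D.nn d * D.p c f - D.p b d * D.nn c * D.nn f
            - D.nn2 * D.p b d * D.p c f))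
        + 2 * (∑ d, ∑ f, D.F d f * D.p b d * D.nn c * D.nn f)
        = (∑ d, ∑ f, D.F d f * (D.nn b * D.nn d * D.p c f + D.p b d * D.nn c * D.nn f))
          - (∑ d, ∑ f, D.F d f * (D.nn2 * D.p b d * D.p c f)) := by
      simp only [Finset.mul_sum, ← Finset.sum_add_distrib, ← Finset.sum_sub_distrib]
      exact Finset.sum_congr rfl fun d _ => Finset.sum_congr rfl fun f _ => by ring
    linear_combination z b c * m1 + z b c * m2 + z b c * m3
  have hcomb : (∑ b, ∑ c, ((∑ d, D.nn2 * D.Dl2 d * (D.p b c * D.nn d - D.p b d * D.nn c))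
        + (∑ d, ∑ f, D.F d f * (D.nn b * D.nn d * D.p c f - D.p b d * D.nn c * D.nn f
            - D.nn2 * D.p b d * D.p c f))
        + (∑ d, ∑ f, D.U d f * (D.p b d * D.p c f - D.p b c * D.p d f))) * z b c)
      + (∑ b, ∑ c, z b c * ((∑ d, ∑ f, D.U d f * (D.p b c * D.p d f - D.p b d * D.p c f))
          + 2 * (∑ d, ∑ f, D.F d f * D.p b d * D.nn c * D.nn f)
          + (∑ d, D.nn2 * D.Dl2 d * (D.p b d * D.nn c - D.p b c * D.nn d)))) = 0 := by
    rw [← Finset.sum_add_distrib]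
    rw [show (∑ b, ((∑ c, ((∑ d, D.nn2 * D.Dl2 d * (D.p b c * D.nn d - D.p b d * D.nn c))
        + (∑ d, ∑ f, D.F d f * (D.nn b * D.nn d * D.p c f - D.p b d * D.nn c * D.nn f
            - D.nn2 * D.p b d * D.p c f))
        + (∑ d, ∑ f, D.U d f * (D.p b d * D.p c f - D.p b c * D.p d f))) * z b c)
      + (∑ c, z b c * ((∑ d, ∑ f, D.U d f * (D.p b c * D.p d f - D.p b d * D.p c f))
          + 2 * (∑ d, ∑ f, D.F d f * D.p b d * D.nn c * D.nn f)
          + (∑ d, D.nn2 * D.Dl2 d * (D.p b d * D.nn c - D.p b c * D.nn d))))))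
      = ∑ b, ∑ c, (z b c * (∑ d, ∑ f, D.F d f
          * (D.nn b * D.nn d * D.p c f + D.p b d * D.nn c * D.nn f))
        - z b c * (∑ d, ∑ f, D.F d f * (D.nn2 * D.p b d * D.p c f))) from
      Finset.sum_congr rfl fun b _ => by
        rw [← Finset.sum_add_distrib]
        exact Finset.sum_congr rfl fun c _ => percomb b c]
    rw [show (∑ b, ∑ c, (z b c * (∑ d, ∑ f, D.F d f
          * (D.nn b * D.nn d * D.p c f + D.p b d * D.nn c * D.nn f))
        - z b c * (∑ d, ∑ f, D.F d f * (D.nn2 * D.p b d * D.p c f))))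
      = (∑ b, ∑ c, z b c * (∑ d, ∑ f, D.F d f
          * (D.nn b * D.nn d * D.p c f + D.p b d * D.nn c * D.nn f)))
        - (∑ b, ∑ c, z b c * (∑ d, ∑ f, D.F d f * (D.nn2 * D.p b d * D.p c f))) by
      simp only [← Finset.sum_sub_distrib]]
    rw [hfin1, hfin2]
    ring
  rw [Finset.sum_add_distrib]
  linarith [match1, match2, match3, match4, hXsplit, hA2z, hcomb]

end PD
lemma pd_congr_nhds {f g : Sc m} {x : Fin m → ℝ} (a : Fin m) (h : f =ᶠ[nhds x] g) :
    pd a f x = pd a g x := by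
  unfold pd; rw [h.fderiv_eq]
lemma pd_const (a : Fin m) (c : ℝ) (x : Fin m → ℝ) : pd a (fun _ => c) x = 0 := by
  unfold pd; simp
lemma pd_add {f g : Sc m} {x : Fin m → ℝ} (a : Fin m)
    (hf : DifferentiableAt ℝ f x) (hg : DifferentiableAt ℝ g x) :
    pd a (fun y => f y + g y) x = pd a f x + pd a g x := by
  unfold pd; rw [fderiv_fun_add hf hg]; rfl
lemma pd_sub {f g : Sc m} {x : Fin m → ℝ} (a : Fin m)
    (hf : DifferentiableAt ℝ f x) (hg : DifferentiableAt ℝ g x) :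
    pd a (fun y => f y - g y) x = pd a f x - pd a g x := by
  unfold pd; rw [fderiv_fun_sub hf hg]; rfl
lemma pd_mul {f g : Sc m} {x : Fin m → ℝ} (a : Fin m)
    (hf : DifferentiableAt ℝ f x) (hg : DifferentiableAt ℝ g x) :
    pd a (fun y => f y * g y) x = f x * pd a g x + g x * pd a f x := by
  unfold pd; rw [fderiv_fun_mul hf hg]; simp
lemma pd_sum {ι : Type*} (s : Finset ι) {f : ι → Sc m} {x : Fin m → ℝ} (a : Fin m)
    (hf : ∀ i ∈ s, DifferentiableAt ℝ (f i) x) :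
    pd a (fun y => ∑ i ∈ s, f i y) x = ∑ i ∈ s, pd a (f i) x := by
  unfold pd; rw [fderiv_fun_sum hf]; simp
lemma pd_cmul {f : Sc m} {x : Fin m → ℝ} (a : Fin m) (c : ℝ)
    (hf : DifferentiableAt ℝ f x) :
    pd a (fun y => c * f y) x = c * pd a f x := by
  unfold pd; rw [fderiv_const_mul hf]; simp

/-- differentiability from ContDiffOn on an open set -/
lemma dAt {U : Set (Fin m → ℝ)} (hU : IsOpen U) {f : Sc m}
    (hf : ContDiffOn ℝ (⊤ : ℕ∞) f U) {x : Fin m → ℝ} (hx : x ∈ U) :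
    DifferentiableAt ℝ f x :=
  (hf.contDiffAt (hU.mem_nhds hx)).differentiableAt (by simp)

/-- the four differentiated inverse relations -/
lemma mk_d1 {U : Set (Fin m → ℝ)} (hU : IsOpen U)
    {γ : Ten m} {ℓ : Vec m} {ℓ2 : Sc m} {P : Ten m} {n : Vec m} {n2 : Sc m}
    (hdata : MetricData U γ ℓ ℓ2 P n n2) {x : Fin m → ℝ} (hx : x ∈ U) :
    ∀ e a b, (∑ c, (pd e (fun y => P y a c) x * γ x c b
        + P x a c * pd e (fun y => γ y c b) x))
      + (pd e (fun y => n y a) x * ℓ x b + n x a * pd e (fun y => ℓ y b) x) = 0 := by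
  obtain ⟨hγ, hℓ, hℓ2, hP, hn, hn2, hγs, hPs, hinv⟩ := hdata
  have hmem : U ∈ nhds x := hU.mem_nhds hx
  have hdγ : ∀ a b, DifferentiableAt ℝ (fun y => γ y a b) x := fun a b => dAt hU (hγ a b) hx
  have hdℓ : ∀ a, DifferentiableAt ℝ (fun y => ℓ y a) x := fun a => dAt hU (hℓ a) hx
  have hdP : ∀ a b, DifferentiableAt ℝ (fun y => P y a b) x := fun a b => dAt hU (hP a b) hx
  have hdn : ∀ a, DifferentiableAt ℝ (fun y => n y a) x := fun a => dAt hU (hn a) hx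
  intro e a b
  have h0 : pd e (fun y => (∑ c, P y a c * γ y c b) + n y a * ℓ y b) x = 0 := by
    rw [pd_congr_nhds e (Filter.eventuallyEq_of_mem hmem fun y hy => (hinv y hy).1 a b)]
    exact pd_const e _ x
  have h1 : pd e (fun y => (∑ c, P y a c * γ y c b) + n y a * ℓ y b) x
      = (∑ c, (P x a c * pd e (fun y => γ y c b) x + γ x c b * pd e (fun y => P y a c) x))
        + (n x a * pd e (fun y => ℓ y b) x + ℓ x b * pd e (fun y => n y a) x) := by
    rw [pd_add e (DifferentiableAt.fun_sum fun c _ => (hdP a c).fun_mul (hdγ c b))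
      ((hdn a).fun_mul (hdℓ b))]
    rw [pd_sum Finset.univ e fun c _ => (hdP a c).fun_mul (hdγ c b)]
    rw [pd_mul e (hdn a) (hdℓ b)]
    congr 1
    exact Finset.sum_congr rfl fun c _ => pd_mul e (hdP a c) (hdγ c b)
  rw [h1] at h0
  rw [show (∑ c, (pd e (fun y => P y a c) x * γ x c b + P x a c * pd e (fun y => γ y c b) x))
      = ∑ c, (P x a c * pd e (fun y => γ y c b) x + γ x c b * pd e (fun y => P y a c) x) from
    Finset.sum_congr rfl fun c _ => by ring]
  linarith

lemma mk_d2 {U : Set (Fin m → ℝ)} (hU : IsOpen U)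
    {γ : Ten m} {ℓ : Vec m} {ℓ2 : Sc m} {P : Ten m} {n : Vec m} {n2 : Sc m}
    (hdata : MetricData U γ ℓ ℓ2 P n n2) {x : Fin m → ℝ} (hx : x ∈ U) :
    ∀ e a, (∑ b, (pd e (fun y => P y a b) x * ℓ x b + P x a b * pd e (fun y => ℓ y b) x))
      + (pd e ℓ2 x * n x a + ℓ2 x * pd e (fun y => n y a) x) = 0 := by
  obtain ⟨hγ, hℓ, hℓ2, hP, hn, hn2, hγs, hPs, hinv⟩ := hdata
  have hmem : U ∈ nhds x := hU.mem_nhds hx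
  have hdℓ : ∀ a, DifferentiableAt ℝ (fun y => ℓ y a) x := fun a => dAt hU (hℓ a) hx
  have hdP : ∀ a b, DifferentiableAt ℝ (fun y => P y a b) x := fun a b => dAt hU (hP a b) hx
  have hdn : ∀ a, DifferentiableAt ℝ (fun y => n y a) x := fun a => dAt hU (hn a) hx
  have hdℓ2 : DifferentiableAt ℝ ℓ2 x := dAt hU hℓ2 hx
  intro e a
  have h0 : pd e (fun y => (∑ b, P y a b * ℓ y b) + ℓ2 y * n y a) x = 0 := by
    rw [pd_congr_nhds e (Filter.eventuallyEq_of_mem hmem fun y hy => (hinv y hy).2.1 a)]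
    exact pd_const e _ x
  have h1 : pd e (fun y => (∑ b, P y a b * ℓ y b) + ℓ2 y * n y a) x
      = (∑ b, (P x a b * pd e (fun y => ℓ y b) x + ℓ x b * pd e (fun y => P y a b) x))
        + (ℓ2 x * pd e (fun y => n y a) x + n x a * pd e ℓ2 x) := by
    rw [pd_add e (DifferentiableAt.fun_sum fun b _ => (hdP a b).fun_mul (hdℓ b)) (hdℓ2.fun_mul (hdn a))]
    rw [pd_sum Finset.univ e fun b _ => (hdP a b).fun_mul (hdℓ b)]
    rw [pd_mul e hdℓ2 (hdn a)]
    congr 1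
    exact Finset.sum_congr rfl fun b _ => pd_mul e (hdP a b) (hdℓ b)
  rw [h1] at h0
  rw [show (∑ b, (pd e (fun y => P y a b) x * ℓ x b + P x a b * pd e (fun y => ℓ y b) x))
      = ∑ b, (P x a b * pd e (fun y => ℓ y b) x + ℓ x b * pd e (fun y => P y a b) x) from
    Finset.sum_congr rfl fun b _ => by ring]
  linarith

lemma mk_d3 {U : Set (Fin m → ℝ)} (hU : IsOpen U)
    {γ : Ten m} {ℓ : Vec m} {ℓ2 : Sc m} {P : Ten m} {n : Vec m} {n2 : Sc m}
    (hdata : MetricData U γ ℓ ℓ2 P n n2) {x : Fin m → ℝ} (hx : x ∈ U) :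
    ∀ e, (∑ a, (pd e (fun y => n y a) x * ℓ x a + n x a * pd e (fun y => ℓ y a) x))
      + (pd e n2 x * ℓ2 x + n2 x * pd e ℓ2 x) = 0 := by
  obtain ⟨hγ, hℓ, hℓ2, hP, hn, hn2, hγs, hPs, hinv⟩ := hdata
  have hmem : U ∈ nhds x := hU.mem_nhds hx
  have hdℓ : ∀ a, DifferentiableAt ℝ (fun y => ℓ y a) x := fun a => dAt hU (hℓ a) hx
  have hdn : ∀ a, DifferentiableAt ℝ (fun y => n y a) x := fun a => dAt hU (hn a) hx
  have hdℓ2 : DifferentiableAt ℝ ℓ2 x := dAt hU hℓ2 hx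
  have hdn2 : DifferentiableAt ℝ n2 x := dAt hU hn2 hx
  intro e
  have h0 : pd e (fun y => (∑ a, n y a * ℓ y a) + n2 y * ℓ2 y) x = 0 := by
    rw [pd_congr_nhds e (Filter.eventuallyEq_of_mem hmem fun y hy => (hinv y hy).2.2.1)]
    exact pd_const e _ x
  have h1 : pd e (fun y => (∑ a, n y a * ℓ y a) + n2 y * ℓ2 y) x
      = (∑ a, (n x a * pd e (fun y => ℓ y a) x + ℓ x a * pd e (fun y => n y a) x))
        + (n2 x * pd e ℓ2 x + ℓ2 x * pd e n2 x) := by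
    rw [pd_add e (DifferentiableAt.fun_sum fun a _ => (hdn a).fun_mul (hdℓ a)) (hdn2.fun_mul hdℓ2)]
    rw [pd_sum Finset.univ e fun a _ => (hdn a).fun_mul (hdℓ a)]
    rw [pd_mul e hdn2 hdℓ2]
    congr 1
    exact Finset.sum_congr rfl fun a _ => pd_mul e (hdn a) (hdℓ a)
  rw [h1] at h0
  rw [show (∑ a, (pd e (fun y => n y a) x * ℓ x a + n x a * pd e (fun y => ℓ y a) x))
      = ∑ a, (n x a * pd e (fun y => ℓ y a) x + ℓ x a * pd e (fun y => n y a) x) from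
    Finset.sum_congr rfl fun a _ => by ring]
  linarith

lemma mk_d4 {U : Set (Fin m → ℝ)} (hU : IsOpen U)
    {γ : Ten m} {ℓ : Vec m} {ℓ2 : Sc m} {P : Ten m} {n : Vec m} {n2 : Sc m}
    (hdata : MetricData U γ ℓ ℓ2 P n n2) {x : Fin m → ℝ} (hx : x ∈ U) :
    ∀ e a, (∑ b, (pd e (fun y => γ y a b) x * n x b + γ x a b * pd e (fun y => n y b) x))
      + (pd e n2 x * ℓ x a + n2 x * pd e (fun y => ℓ y a) x) = 0 := by
  obtain ⟨hγ, hℓ, hℓ2, hP, hn, hn2, hγs, hPs, hinv⟩ := hdata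
  have hmem : U ∈ nhds x := hU.mem_nhds hx
  have hdγ : ∀ a b, DifferentiableAt ℝ (fun y => γ y a b) x := fun a b => dAt hU (hγ a b) hx
  have hdℓ : ∀ a, DifferentiableAt ℝ (fun y => ℓ y a) x := fun a => dAt hU (hℓ a) hx
  have hdn : ∀ a, DifferentiableAt ℝ (fun y => n y a) x := fun a => dAt hU (hn a) hx
  have hdn2 : DifferentiableAt ℝ n2 x := dAt hU hn2 hx
  intro e a
  have h0 : pd e (fun y => (∑ b, γ y a b * n y b) + n2 y * ℓ y a) x = 0 := by
    rw [pd_congr_nhds e (Filter.eventuallyEq_of_mem hmem fun y hy => (hinv y hy).2.2.2 a)]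
    exact pd_const e _ x
  have h1 : pd e (fun y => (∑ b, γ y a b * n y b) + n2 y * ℓ y a) x
      = (∑ b, (γ x a b * pd e (fun y => n y b) x + n x b * pd e (fun y => γ y a b) x))
        + (n2 x * pd e (fun y => ℓ y a) x + ℓ x a * pd e n2 x) := by
    rw [pd_add e (DifferentiableAt.fun_sum fun b _ => (hdγ a b).fun_mul (hdn b)) (hdn2.fun_mul (hdℓ a))]
    rw [pd_sum Finset.univ e fun b _ => (hdγ a b).fun_mul (hdn b)]
    rw [pd_mul e hdn2 (hdℓ a)]
    congr 1
    exact Finset.sum_congr rfl fun b _ => pd_mul e (hdγ a b) (hdn b)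
  rw [h1] at h0
  rw [show (∑ b, (pd e (fun y => γ y a b) x * n x b + γ x a b * pd e (fun y => n y b) x))
      = ∑ b, (γ x a b * pd e (fun y => n y b) x + n x b * pd e (fun y => γ y a b) x) from
    Finset.sum_congr rfl fun b _ => by ring]
  linarith

/-- package the point data -/
def mkPD {U : Set (Fin m → ℝ)} (hU : IsOpen U)
    {γ : Ten m} {ℓ : Vec m} {ℓ2 : Sc m} {P : Ten m} {n : Vec m} {n2 : Sc m}
    (hdata : MetricData U γ ℓ ℓ2 P n n2) {x : Fin m → ℝ} (hx : x ∈ U) : PD m where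
  g := γ x
  p := P x
  l := ℓ x
  nn := n x
  l2 := ℓ2 x
  nn2 := n2 x
  Dg := fun e a b => pd e (fun y => γ y a b) x
  Dl := fun e a => pd e (fun y => ℓ y a) x
  Dl2 := fun e => pd e ℓ2 x
  Dp := fun e a b => pd e (fun y => P y a b) x
  Dn := fun e a => pd e (fun y => n y a) x
  Dn2 := fun e => pd e n2 x
  hg := fun a b => hdata.2.2.2.2.2.2.1 x hx a b
  hp := fun a b => hdata.2.2.2.2.2.2.2.1 x hx a b
  hDg := fun e a b => pd_congr_nhds e (Filter.eventuallyEq_of_mem (hU.mem_nhds hx)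
    fun y hy => hdata.2.2.2.2.2.2.1 y hy a b)
  i1 := fun a b => (hdata.2.2.2.2.2.2.2.2 x hx).1 a b
  i2 := fun a => (hdata.2.2.2.2.2.2.2.2 x hx).2.1 a
  i3 := (hdata.2.2.2.2.2.2.2.2 x hx).2.2.1
  i4 := fun a => (hdata.2.2.2.2.2.2.2.2 x hx).2.2.2 a
  d1 := mk_d1 hU hdata hx
  d2 := mk_d2 hU hdata hx
  d3 := mk_d3 hU hdata hx
  d4 := mk_d4 hU hdata hx

end HypAux

open HypData in
/-- Lemma 7 of the paper, further `∇̊`-identities involving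
`n⁽²⁾P^{bd} − n^bn^d` and `P^{bd}n^c − P^{bc}n^d`. -/
theorem statement12 (m : ℕ) (hm : 1 ≤ m) (U : Set (Fin m → ℝ)) (hU : IsOpen U)
    (γ : Ten m) (ℓ : Vec m) (ℓ2 : Sc m) (P : Ten m) (n : Vec m) (n2 : Sc m)
    (hdata : MetricData U γ ℓ ℓ2 P n n2) :
    -- (1)
    ((∀ x ∈ U, ∀ c b d,
      covD2U (Gam0 γ ℓ P n) (fun y b' d' => n2 y * P y b' d' - n y b' * n y d')
          x c b d
        = -((n2 x * P x b d - n x b * n x d)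
            * (2 * (∑ f, Ff ℓ x c f * n x f) + n2 x * pd c ℓ2 x))
          + ∑ f, Uf γ ℓ n n2 x c f
            * (2 * n x f * P x b d - P x b f * n x d - P x d f * n x b))
    -- (2)
    ∧ (∀ x ∈ U, ∀ b c,
      (∑ d, covD3U (Gam0 γ ℓ P n)
          (fun y i j k => P y i j * n y k - P y i k * n y j) x d b d c)
        = (∑ d, n2 x * pd d ℓ2 x * (P x b c * n x d - P x b d * n x c))
          + (∑ d, ∑ f, Ff ℓ x d f
            * (n x b * n x d * P x c f - P x b d * n x c * n x f
              - n2 x * P x b d * P x c f))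
          + (∑ d, ∑ f, Uf γ ℓ n n2 x d f
            * (P x b d * P x c f - P x b c * P x d f)))
    -- (3)
    ∧ (∀ Z : Ten m, SmTen U Z → (∀ x ∈ U, ∀ a b, Z x a b = Z x b a) →
      ∀ x ∈ U, ∀ c,
      (∑ b, ∑ d,
        (covD2 (Gam0 γ ℓ P n) Z x d b c - covD2 (Gam0 γ ℓ P n) Z x c b d)
          * (n2 x * P x b d - n x b * n x d))
        = (∑ f, covD11 (Gam0 γ ℓ P n)
            (fun y f' c' => ∑ b, ∑ d, (n2 y * P y b d - n y b * n y d)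
              * (kd f' d * Z y b c' - kd f' c' * Z y b d)) x f f c)
          + (∑ b, ∑ d, (n2 x * P x b d - n x b * n x d)
            * (Z x b c * (2 * (∑ f, Ff ℓ x d f * n x f) + n2 x * pd d ℓ2 x)
              - Z x b d * (2 * (∑ f, Ff ℓ x c f * n x f) + n2 x * pd c ℓ2 x)))
          + (∑ b, ∑ d, ∑ f, (P x d f * n x b - P x b d * n x f)
            * (Z x b c * Uf γ ℓ n n2 x d f - 2 * Z x b d * Uf γ ℓ n n2 x c f)))
    -- (4)
    ∧ (∀ Z : Ten m, SmTen U Z → (∀ x ∈ U, ∀ a b, Z x a b = Z x b a) →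
      ∀ x ∈ U,
      (∑ b, ∑ c, ∑ d,
        (covD2 (Gam0 γ ℓ P n) Z x d b c - covD2 (Gam0 γ ℓ P n) Z x c b d)
          * P x b d * n x c)
        = (∑ d, covD1U (Gam0 γ ℓ P n)
            (fun y d' => ∑ b, ∑ c, (P y b d' * n y c - P y b c * n y d') * Z y b c)
            x d d)
          + ∑ b, ∑ c, Z x b c
            * ((∑ d, ∑ f, Uf γ ℓ n n2 x d f
                * (P x b c * P x d f - P x b d * P x c f))
              + 2 * (∑ d, ∑ f, Ff ℓ x d f * P x b d * n x c * n x f)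
              + (∑ d, n2 x * pd d ℓ2 x * (P x b d * n x c - P x b c * n x d))))) := by
  refine ⟨?_, ?_, ?_, ?_⟩
  · -- (1)
    intro x hx c b d
    have hdP : ∀ a b', DifferentiableAt ℝ (fun y => P y a b') x :=
      fun a b' => HypAux.dAt hU (hdata.2.2.2.1 a b') hx
    have hdn : ∀ a, DifferentiableAt ℝ (fun y => n y a) x :=
      fun a => HypAux.dAt hU (hdata.2.2.2.2.1 a) hx
    have hdn2 : DifferentiableAt ℝ n2 x := HypAux.dAt hU hdata.2.2.2.2.2.1 hx
    have hpd : pd c (fun y => n2 y * P y b d - n y b * n y d) x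
        = n2 x * pd c (fun y => P y b d) x + P x b d * pd c n2 x
          - (n x b * pd c (fun y => n y d) x + n x d * pd c (fun y => n y b) x) := by
      rw [HypAux.pd_sub c (hdn2.fun_mul (hdP b d)) ((hdn b).fun_mul (hdn d)),
        HypAux.pd_mul c hdn2 (hdP b d), HypAux.pd_mul c (hdn b) (hdn d)]
    show pd c (fun y => n2 y * P y b d - n y b * n y d) x
        + (∑ f, Gam0 γ ℓ P n x b c f * (n2 x * P x f d - n x f * n x d))
        + (∑ f, Gam0 γ ℓ P n x d c f * (n2 x * P x b f - n x b * n x f)) = _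
    rw [hpd]
    exact (HypAux.mkPD hU hdata hx).A1 c b d
  · -- (2)
    intro x hx b c
    have hdP : ∀ a b', DifferentiableAt ℝ (fun y => P y a b') x :=
      fun a b' => HypAux.dAt hU (hdata.2.2.2.1 a b') hx
    have hdn : ∀ a, DifferentiableAt ℝ (fun y => n y a) x :=
      fun a => HypAux.dAt hU (hdata.2.2.2.2.1 a) hx
    have perd : ∀ d, covD3U (Gam0 γ ℓ P n)
        (fun y i j k => P y i j * n y k - P y i k * n y j) x d b d c
        = ((P x b d * pd d (fun y => n y c) x + n x c * pd d (fun y => P y b d) x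
            - (P x b c * pd d (fun y => n y d) x + n x d * pd d (fun y => P y b c) x))
          + (∑ f, Gam0 γ ℓ P n x b d f * (P x f d * n x c - P x f c * n x d))
          + (∑ f, Gam0 γ ℓ P n x d d f * (P x b f * n x c - P x b c * n x f))
          + (∑ f, Gam0 γ ℓ P n x c d f * (P x b d * n x f - P x b f * n x d))) := by
      intro d
      have hpdQ : pd d (fun y => P y b d * n y c - P y b c * n y d) x
          = P x b d * pd d (fun y => n y c) x + n x c * pd d (fun y => P y b d) x
            - (P x b c * pd d (fun y => n y d) x + n x d * pd d (fun y => P y b c) x) := by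
        rw [HypAux.pd_sub d ((hdP b d).fun_mul (hdn c)) ((hdP b c).fun_mul (hdn d)),
          HypAux.pd_mul d (hdP b d) (hdn c), HypAux.pd_mul d (hdP b c) (hdn d)]
      calc covD3U (Gam0 γ ℓ P n)
              (fun y i j k => P y i j * n y k - P y i k * n y j) x d b d c
          = pd d (fun y => P y b d * n y c - P y b c * n y d) x
            + (∑ f, Gam0 γ ℓ P n x b d f * (P x f d * n x c - P x f c * n x d))
            + (∑ f, Gam0 γ ℓ P n x d d f * (P x b f * n x c - P x b c * n x f))
            + (∑ f, Gam0 γ ℓ P n x c d f * (P x b d * n x f - P x b f * n x d)) := rfl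
        _ = _ := by rw [hpdQ]
    rw [Finset.sum_congr rfl fun d _ => perd d]
    exact (HypAux.mkPD hU hdata hx).A2 b c
  · -- (3)
    intro Z hZsm hZsym x hx c
    have hdP : ∀ a b', DifferentiableAt ℝ (fun y => P y a b') x :=
      fun a b' => HypAux.dAt hU (hdata.2.2.2.1 a b') hx
    have hdn : ∀ a, DifferentiableAt ℝ (fun y => n y a) x :=
      fun a => HypAux.dAt hU (hdata.2.2.2.2.1 a) hx
    have hdn2 : DifferentiableAt ℝ n2 x := HypAux.dAt hU hdata.2.2.2.2.2.1 hx
    have hdZ : ∀ a b, DifferentiableAt ℝ (fun y => Z y a b) x :=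
      fun a b => HypAux.dAt hU (hZsm a b) hx
    have hdT : ∀ b d, DifferentiableAt ℝ (fun y => n2 y * P y b d - n y b * n y d) x :=
      fun b d => (hdn2.mul (hdP b d)).sub ((hdn b).mul (hdn d))
    have hpdS : ∀ f, pd f (fun y => ∑ b, ∑ d, (n2 y * P y b d - n y b * n y d)
          * (kd f d * Z y b c - kd f c * Z y b d)) x
        = ∑ b, ∑ d, ((n2 x * P x b d - n x b * n x d)
            * (kd f d * pd f (fun y => Z y b c) x - kd f c * pd f (fun y => Z y b d) x)
          + (kd f d * Z x b c - kd f c * Z x b d)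
            * (n2 x * pd f (fun y => P y b d) x + P x b d * pd f n2 x
              - (n x b * pd f (fun y => n y d) x + n x d * pd f (fun y => n y b) x))) := by
      intro f
      have hdK : ∀ b d, DifferentiableAt ℝ (fun y => kd f d * Z y b c - kd f c * Z y b d) x :=
        fun b d => ((hdZ b c).const_mul _).sub ((hdZ b d).const_mul _)
      rw [HypAux.pd_sum Finset.univ f
        (fun b _ => DifferentiableAt.fun_sum fun d _ => (hdT b d).fun_mul (hdK b d))]
      refine Finset.sum_congr rfl fun b _ => ?_
      rw [HypAux.pd_sum Finset.univ f (fun d _ => (hdT b d).fun_mul (hdK b d))]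
      refine Finset.sum_congr rfl fun d _ => ?_
      rw [HypAux.pd_mul f (hdT b d) (hdK b d)]
      rw [HypAux.pd_sub f (hdn2.fun_mul (hdP b d)) ((hdn b).fun_mul (hdn d)),
        HypAux.pd_mul f hdn2 (hdP b d), HypAux.pd_mul f (hdn b) (hdn d)]
      rw [HypAux.pd_sub f ((hdZ b c).const_mul _) ((hdZ b d).const_mul _),
        HypAux.pd_cmul f _ (hdZ b c), HypAux.pd_cmul f _ (hdZ b d)]
    have hterm : ∀ f, covD11 (Gam0 γ ℓ P n)
        (fun y f' c' => ∑ b, ∑ d, (n2 y * P y b d - n y b * n y d)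
          * (kd f' d * Z y b c' - kd f' c' * Z y b d)) x f f c
        = ((∑ b, ∑ d, ((n2 x * P x b d - n x b * n x d)
            * (kd f d * pd f (fun y => Z y b c) x - kd f c * pd f (fun y => Z y b d) x)
          + (kd f d * Z x b c - kd f c * Z x b d)
            * (n2 x * pd f (fun y => P y b d) x + P x b d * pd f n2 x
              - (n x b * pd f (fun y => n y d) x + n x d * pd f (fun y => n y b) x))))
          + (∑ d, Gam0 γ ℓ P n x f f d * (∑ b', ∑ d', (n2 x * P x b' d' - n x b' * n x d')
              * (kd d d' * Z x b' c - kd d c * Z x b' d')))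
          - (∑ d, Gam0 γ ℓ P n x d f c * (∑ b', ∑ d', (n2 x * P x b' d' - n x b' * n x d')
              * (kd f d' * Z x b' d - kd f d * Z x b' d')))) := by
      intro f
      calc covD11 (Gam0 γ ℓ P n)
              (fun y f' c' => ∑ b, ∑ d, (n2 y * P y b d - n y b * n y d)
                * (kd f' d * Z y b c' - kd f' c' * Z y b d)) x f f c
          = pd f (fun y => ∑ b, ∑ d, (n2 y * P y b d - n y b * n y d)
              * (kd f d * Z y b c - kd f c * Z y b d)) x
            + (∑ d, Gam0 γ ℓ P n x f f d
                * (∑ b', ∑ d', (n2 x * P x b' d' - n x b' * n x d')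
                  * (kd d d' * Z x b' c - kd d c * Z x b' d')))
            - (∑ d, Gam0 γ ℓ P n x d f c
                * (∑ b', ∑ d', (n2 x * P x b' d' - n x b' * n x d')
                  * (kd f d' * Z x b' d - kd f d * Z x b' d'))) := rfl
        _ = _ := by rw [hpdS f]
    rw [Finset.sum_congr rfl fun f _ => hterm f]
    exact (HypAux.mkPD hU hdata hx).A3 (Z x) (fun e a b => pd e (fun y => Z y a b) x)
      (fun a b => hZsym x hx a b) c
  · -- (4)
    intro Z hZsm hZsym x hx
    have hdP : ∀ a b', DifferentiableAt ℝ (fun y => P y a b') x :=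
      fun a b' => HypAux.dAt hU (hdata.2.2.2.1 a b') hx
    have hdn : ∀ a, DifferentiableAt ℝ (fun y => n y a) x :=
      fun a => HypAux.dAt hU (hdata.2.2.2.2.1 a) hx
    have hdZ : ∀ a b, DifferentiableAt ℝ (fun y => Z y a b) x :=
      fun a b => HypAux.dAt hU (hZsm a b) hx
    have hdQ : ∀ b c d, DifferentiableAt ℝ (fun y => P y b d * n y c - P y b c * n y d) x :=
      fun b c d => ((hdP b d).mul (hdn c)).sub ((hdP b c).mul (hdn d))
    have hpdW : ∀ d, pd d (fun y => ∑ b, ∑ c,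
          (P y b d * n y c - P y b c * n y d) * Z y b c) x
        = ∑ b, ∑ c, ((P x b d * n x c - P x b c * n x d) * pd d (fun y => Z y b c) x
          + Z x b c * (P x b d * pd d (fun y => n y c) x + n x c * pd d (fun y => P y b d) x
            - (P x b c * pd d (fun y => n y d) x + n x d * pd d (fun y => P y b c) x))) := by
      intro d
      rw [HypAux.pd_sum Finset.univ d
        (fun b _ => DifferentiableAt.fun_sum fun c _ => (hdQ b c d).fun_mul (hdZ b c))]
      refine Finset.sum_congr rfl fun b _ => ?_
      rw [HypAux.pd_sum Finset.univ d (fun c _ => (hdQ b c d).fun_mul (hdZ b c))]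
      refine Finset.sum_congr rfl fun c _ => ?_
      rw [HypAux.pd_mul d (hdQ b c d) (hdZ b c)]
      rw [HypAux.pd_sub d ((hdP b d).fun_mul (hdn c)) ((hdP b c).fun_mul (hdn d)),
        HypAux.pd_mul d (hdP b d) (hdn c), HypAux.pd_mul d (hdP b c) (hdn d)]
    have hterm : ∀ d, covD1U (Gam0 γ ℓ P n)
        (fun y d' => ∑ b, ∑ c, (P y b d' * n y c - P y b c * n y d') * Z y b c) x d d
        = ((∑ b, ∑ c, ((P x b d * n x c - P x b c * n x d) * pd d (fun y => Z y b c) x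
            + Z x b c * (P x b d * pd d (fun y => n y c) x + n x c * pd d (fun y => P y b d) x
              - (P x b c * pd d (fun y => n y d) x + n x d * pd d (fun y => P y b c) x))))
          + (∑ f, Gam0 γ ℓ P n x d d f
              * (∑ b, ∑ c, (P x b f * n x c - P x b c * n x f) * Z x b c))) := by
      intro d
      calc covD1U (Gam0 γ ℓ P n)
              (fun y d' => ∑ b, ∑ c, (P y b d' * n y c - P y b c * n y d') * Z y b c) x d d
          = pd d (fun y => ∑ b, ∑ c, (P y b d * n y c - P y b c * n y d) * Z y b c) x
            + (∑ f, Gam0 γ ℓ P n x d d f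
                * (∑ b, ∑ c, (P x b f * n x c - P x b c * n x f) * Z x b c)) := rfl
        _ = _ := by rw [hpdW d]
    rw [Finset.sum_congr rfl fun d _ => hterm d]
    exact (HypAux.mkPD hU hdata hx).A4 (Z x) (fun e a b => pd e (fun y => Z y a b) x)
      (fun a b => hZsym x hx a b)
end
end
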